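/- arXiv:1811.00457 — 10 statements merged into one kernel-verified Lean document; each statement's English description precedes it below -/
import Mathlib

section
/- For all real numbers a > 0 and b, the integral over the real line ∫_{-∞}^{∞} Φ((y + b)/a) · φ(y) dy equals Φ(b/√(a² + 1)). -/
open MeasureTheory Real

/-- Standard normal density. -/
noncomputable def stdNormalPdf (x : ℝ) : ℝ := Real.exp (-x ^ 2 / 2) / Real.sqrt (2 * Real.pi)

/-- Standard normal CDF. -/
noncomputable def stdNormalCdf (x : ℝ) : ℝ := ∫ t in Set.Iic x, stdNormalPdf t

lemma two_pi_pos' : (0:ℝ) < 2 * π := by positivity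

lemma sqrt_two_pi_pos : 0 < Real.sqrt (2 * π) := Real.sqrt_pos.2 two_pi_pos'

lemma stdNormalPdf_eq (x : ℝ) :
    stdNormalPdf x = (Real.sqrt (2 * π))⁻¹ * Real.exp (-(1/2) * x ^ 2) := by
  unfold stdNormalPdf
  rw [div_eq_inv_mul]
  ring_nf

lemma stdNormalPdf_nonneg (x : ℝ) : 0 ≤ stdNormalPdf x := by
  unfold stdNormalPdf; positivity

lemma stdNormalPdf_le (x : ℝ) : stdNormalPdf x ≤ (Real.sqrt (2 * π))⁻¹ := by
  rw [stdNormalPdf_eq]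
  have h1 : Real.exp (-(1/2) * x ^ 2) ≤ 1 := by
    rw [Real.exp_le_one_iff]; nlinarith [sq_nonneg x]
  calc (Real.sqrt (2 * π))⁻¹ * Real.exp (-(1/2) * x ^ 2)
      ≤ (Real.sqrt (2 * π))⁻¹ * 1 := by
        exact mul_le_mul_of_nonneg_left h1 (by positivity)
    _ = (Real.sqrt (2 * π))⁻¹ := mul_one _

lemma continuous_stdNormalPdf : Continuous stdNormalPdf := by
  unfold stdNormalPdf
  fun_prop

lemma stdNormalPdf_neg (x : ℝ) : stdNormalPdf (-x) = stdNormalPdf x := by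
  unfold stdNormalPdf; rw [neg_pow]; ring_nf

lemma integrable_stdNormalPdf : Integrable stdNormalPdf := by
  have : Integrable (fun x : ℝ => Real.exp (-(1/2) * x ^ 2)) :=
    integrable_exp_neg_mul_sq (by norm_num)
  have h := this.const_mul (Real.sqrt (2 * π))⁻¹
  refine h.congr ?_
  filter_upwards with x
  rw [stdNormalPdf_eq]

lemma integral_stdNormalPdf : ∫ x, stdNormalPdf x = 1 := by
  have h : ∫ x : ℝ, stdNormalPdf x
      = (Real.sqrt (2 * π))⁻¹ * ∫ x : ℝ, Real.exp (-(1/2) * x ^ 2) := by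
    rw [← integral_const_mul]
    congr 1; funext x; rw [stdNormalPdf_eq]
  rw [h, integral_gaussian]
  rw [show π / (1/2 : ℝ) = 2 * π by ring]
  exact inv_mul_cancel₀ sqrt_two_pi_pos.ne'

lemma integrableOn_stdNormalPdf (s : Set ℝ) : IntegrableOn stdNormalPdf s :=
  integrable_stdNormalPdf.integrableOn

lemma stdNormalCdf_nonneg (x : ℝ) : 0 ≤ stdNormalCdf x :=
  setIntegral_nonneg measurableSet_Iic fun t _ => stdNormalPdf_nonneg t

lemma stdNormalCdf_le_one (x : ℝ) : stdNormalCdf x ≤ 1 := by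
  rw [← integral_stdNormalPdf]
  exact setIntegral_le_integral integrable_stdNormalPdf
    (Filter.Eventually.of_forall stdNormalPdf_nonneg)

lemma hasDerivAt_stdNormalCdf (x : ℝ) : HasDerivAt stdNormalCdf (stdNormalPdf x) x := by
  have heq : ∀ y : ℝ, stdNormalCdf y = stdNormalCdf 0 + ∫ t in (0:ℝ)..y, stdNormalPdf t := by
    intro y
    unfold stdNormalCdf
    rw [← intervalIntegral.integral_Iic_sub_Iic (integrableOn_stdNormalPdf _)
      (integrableOn_stdNormalPdf _)]
    ring
  have h : HasDerivAt (fun y => stdNormalCdf 0 + ∫ t in (0:ℝ)..y, stdNormalPdf t)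
      (stdNormalPdf x) x := by
    refine HasDerivAt.const_add _ ?_
    exact intervalIntegral.integral_hasDerivAt_right
      (integrable_stdNormalPdf.intervalIntegrable)
      (continuous_stdNormalPdf.stronglyMeasurableAtFilter _ _)
      continuous_stdNormalPdf.continuousAt
  exact (h.congr_of_eventuallyEq (Filter.Eventually.of_forall heq)).congr_deriv rfl

lemma continuous_stdNormalCdf : Continuous stdNormalCdf := by
  have : Differentiable ℝ stdNormalCdf := fun x => (hasDerivAt_stdNormalCdf x).differentiableAt
  exact this.continuous

lemma stdNormalCdf_neg (x : ℝ) : stdNormalCdf (-x) = 1 - stdNormalCdf x := by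
  have h1 : stdNormalCdf x = ∫ t in Set.Ioi (-x), stdNormalPdf t := by
    unfold stdNormalCdf
    rw [← integral_comp_neg_Iic]
    congr 1; funext t; rw [stdNormalPdf_neg]
  have h2 : stdNormalCdf (-x) + stdNormalCdf x = 1 := by
    rw [h1]
    unfold stdNormalCdf
    rw [intervalIntegral.integral_Iic_add_Ioi (integrableOn_stdNormalPdf _)
      (integrableOn_stdNormalPdf _), integral_stdNormalPdf]
  linarith

lemma stdNormalCdf_zero : stdNormalCdf 0 = 1/2 := by
  have := stdNormalCdf_neg 0
  rw [neg_zero] at this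
  linarith

lemma integral_exp_shift_sq (k m : ℝ) :
    ∫ y : ℝ, Real.exp (-k * (y + m) ^ 2) = Real.sqrt (π / k) := by
  have h : (∫ y : ℝ, Real.exp (-k * (y + m) ^ 2)) = ∫ y : ℝ, Real.exp (-k * y ^ 2) := by
    exact integral_add_right_eq_self (μ := volume) (fun y : ℝ => Real.exp (-k * y ^ 2)) m
  rw [h]
  exact integral_gaussian k

lemma conv_lemma (a b : ℝ) (ha : 0 < a) :
    ∫ y : ℝ, stdNormalPdf ((y + b) / a) * stdNormalPdf y
      = (a / Real.sqrt (a ^ 2 + 1)) * stdNormalPdf (b / Real.sqrt (a ^ 2 + 1)) := by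
  have ha0 : a ≠ 0 := ha.ne'
  have hs : (0:ℝ) < a ^ 2 + 1 := by positivity
  have hs0 : a ^ 2 + 1 ≠ 0 := hs.ne'
  have h2pi : (Real.sqrt (2 * π))⁻¹ * (Real.sqrt (2 * π))⁻¹ = (2 * π)⁻¹ := by
    rw [← mul_inv, Real.mul_self_sqrt two_pi_pos'.le]
  have key : ∀ y : ℝ, stdNormalPdf ((y + b) / a) * stdNormalPdf y
      = ((2 * π)⁻¹ * Real.exp (-(1/2) * (b ^ 2 / (a ^ 2 + 1))))
          * Real.exp (-((a ^ 2 + 1) / (2 * a ^ 2)) * (y + b / (a ^ 2 + 1)) ^ 2) := by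
    intro y
    have hexp : -(1/2) * ((y + b)/a) ^ 2 + -(1/2) * y ^ 2
        = -(1/2) * (b ^ 2 / (a ^ 2 + 1))
            + -((a ^ 2 + 1) / (2 * a ^ 2)) * (y + b / (a ^ 2 + 1)) ^ 2 := by
      field_simp
      ring
    calc stdNormalPdf ((y + b) / a) * stdNormalPdf y
        = (2 * π)⁻¹ * Real.exp (-(1/2) * ((y + b)/a) ^ 2 + -(1/2) * y ^ 2) := by
          rw [stdNormalPdf_eq, stdNormalPdf_eq, Real.exp_add, ← h2pi]; ring
      _ = _ := by rw [hexp, Real.exp_add]; ring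
  rw [integral_congr_ae (Filter.Eventually.of_forall key), integral_const_mul,
    integral_exp_shift_sq]
  have hksqrt : Real.sqrt (π / ((a ^ 2 + 1) / (2 * a ^ 2)))
      = Real.sqrt (2 * π) * a / Real.sqrt (a ^ 2 + 1) := by
    rw [show π / ((a ^ 2 + 1) / (2 * a ^ 2)) = 2 * π * a ^ 2 / (a ^ 2 + 1) by
      field_simp]
    rw [Real.sqrt_div (by positivity), Real.sqrt_mul two_pi_pos'.le, Real.sqrt_sq ha.le]
  rw [hksqrt, stdNormalPdf_eq]
  have hb2 : (b / Real.sqrt (a ^ 2 + 1)) ^ 2 = b ^ 2 / (a ^ 2 + 1) := by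
    rw [div_pow, Real.sq_sqrt hs.le]
  rw [hb2]
  have hsq : 0 < Real.sqrt (a ^ 2 + 1) := Real.sqrt_pos.2 hs
  have h2 : (2 * π)⁻¹ = (Real.sqrt (2 * π))⁻¹ * (Real.sqrt (2 * π))⁻¹ := h2pi.symm
  rw [h2]
  field_simp

theorem integral_cdf_mul_pdf (a b : ℝ) (ha : 0 < a) :
    (∫ y : ℝ, stdNormalCdf ((y + b) / a) * stdNormalPdf y) =
      stdNormalCdf (b / Real.sqrt (a ^ 2 + 1)) := by
  have ha0 : a ≠ 0 := ha.ne'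
  have hs : (0:ℝ) < a ^ 2 + 1 := by positivity
  set c : ℝ := Real.sqrt (a ^ 2 + 1) with hc_def
  have hc : 0 < c := Real.sqrt_pos.2 hs
  -- integrability of the integrand for every shift t
  have hint : ∀ t : ℝ, Integrable (fun y => stdNormalCdf ((y + t) / a) * stdNormalPdf y) := by
    intro t
    refine Integrable.mono' integrable_stdNormalPdf ?_ ?_
    · exact ((continuous_stdNormalCdf.comp (by fun_prop)).mul
        continuous_stdNormalPdf).aestronglyMeasurable
    · filter_upwards with y
      rw [Real.norm_eq_abs, abs_of_nonneg (mul_nonneg (stdNormalCdf_nonneg _)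
        (stdNormalPdf_nonneg y))]
      calc stdNormalCdf ((y + t) / a) * stdNormalPdf y
          ≤ 1 * stdNormalPdf y :=
            mul_le_mul_of_nonneg_right (stdNormalCdf_le_one _) (stdNormalPdf_nonneg y)
        _ = stdNormalPdf y := one_mul _
  set F : ℝ → ℝ := fun t => ∫ y : ℝ, stdNormalCdf ((y + t) / a) * stdNormalPdf y with hF
  set G : ℝ → ℝ := fun t => stdNormalCdf (t / c) with hG
  -- derivative of F
  have hF' : ∀ t : ℝ, HasDerivAt F (stdNormalPdf (t / c) * (1 / c)) t := by
    intro t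
    have H := hasDerivAt_integral_of_dominated_loc_of_deriv_le (μ := volume)
      (F := fun u y => stdNormalCdf ((y + u) / a) * stdNormalPdf y)
      (F' := fun u y => stdNormalPdf ((y + u) / a) * (1 / a) * stdNormalPdf y)
      (x₀ := t) (bound := fun y => (Real.sqrt (2 * π))⁻¹ * (1 / a) * stdNormalPdf y)
      (s := Metric.ball t 1) (Metric.ball_mem_nhds t one_pos)
      (Filter.Eventually.of_forall fun u =>
        ((continuous_stdNormalCdf.comp
          ((continuous_id.add continuous_const).div_const a)).mul
          continuous_stdNormalPdf).aestronglyMeasurable)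
      (hint t)
      ((((continuous_stdNormalPdf.comp
          ((continuous_id.add continuous_const).div_const a)).mul
          continuous_const).mul continuous_stdNormalPdf).aestronglyMeasurable)
      (Filter.Eventually.of_forall fun y => fun u _ => by
        rw [Real.norm_eq_abs, abs_of_nonneg (by
          have := stdNormalPdf_nonneg ((y + u) / a)
          have := stdNormalPdf_nonneg y
          positivity)]
        have h1 : stdNormalPdf ((y + u) / a) ≤ (Real.sqrt (2 * π))⁻¹ := stdNormalPdf_le _
        have h2 : (0:ℝ) ≤ (1 / a) * stdNormalPdf y := by
          have := stdNormalPdf_nonneg y; positivity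
        calc stdNormalPdf ((y + u) / a) * (1 / a) * stdNormalPdf y
            = stdNormalPdf ((y + u) / a) * ((1 / a) * stdNormalPdf y) := by ring
          _ ≤ (Real.sqrt (2 * π))⁻¹ * ((1 / a) * stdNormalPdf y) :=
              mul_le_mul_of_nonneg_right h1 h2
          _ = (Real.sqrt (2 * π))⁻¹ * (1 / a) * stdNormalPdf y := by ring)
      (integrable_stdNormalPdf.const_mul _)
      (Filter.Eventually.of_forall fun y => fun u _ => by
        have h1 : HasDerivAt (fun v : ℝ => (y + v) / a) (1 / a) u := by
          simpa using ((hasDerivAt_id u).const_add y).div_const a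
        exact ((hasDerivAt_stdNormalCdf ((y + u) / a)).comp u h1).mul_const
          (stdNormalPdf y))
    have hval : (∫ y : ℝ, stdNormalPdf ((y + t) / a) * (1 / a) * stdNormalPdf y)
        = stdNormalPdf (t / c) * (1 / c) := by
      have e : (fun y : ℝ => stdNormalPdf ((y + t) / a) * (1 / a) * stdNormalPdf y)
          = fun y : ℝ => (1 / a) * (stdNormalPdf ((y + t) / a) * stdNormalPdf y) := by
        funext y; ring
      rw [e, integral_const_mul, conv_lemma a t ha]
      field_simp
      rw [← hc_def]; ring
    rw [← hval]
    exact H.2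
  have hG' : ∀ t : ℝ, HasDerivAt G (stdNormalPdf (t / c) * (1 / c)) t := by
    intro t
    have h1 : HasDerivAt (fun v : ℝ => v / c) (1 / c) t := by
      simpa using (hasDerivAt_id t).div_const c
    exact (hasDerivAt_stdNormalCdf (t / c)).comp t h1
  -- F - G is constant
  have hconst : ∀ t : ℝ, F t - G t = F 0 - G 0 := by
    intro t
    have hdiff : Differentiable ℝ (fun u => F u - G u) := fun u =>
      ((hF' u).sub (hG' u)).differentiableAt
    have hderiv : ∀ u : ℝ, deriv (fun u => F u - G u) u = 0 := by
      intro u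
      rw [show (fun u => F u - G u) = F - G from rfl, ((hF' u).sub (hG' u)).deriv]
      ring
    exact is_const_of_deriv_eq_zero hdiff hderiv t 0
  -- value at 0
  have hint0 : Integrable (fun y : ℝ => stdNormalCdf (y / a) * stdNormalPdf y) := by
    have := hint 0
    simpa using this
  have hF0 : F 0 = 1 / 2 := by
    have e0 : F 0 = ∫ y : ℝ, stdNormalCdf (y / a) * stdNormalPdf y := by
      simp only [hF, add_zero]
    have e1 : F 0 = 1 - F 0 := by
      calc F 0 = ∫ y : ℝ, stdNormalCdf (y / a) * stdNormalPdf y := e0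
        _ = ∫ y : ℝ, stdNormalCdf (-y / a) * stdNormalPdf (-y) :=
            (integral_neg_eq_self (fun y : ℝ => stdNormalCdf (y / a) * stdNormalPdf y)
              volume).symm
        _ = ∫ y : ℝ, (1 - stdNormalCdf (y / a)) * stdNormalPdf y := by
            congr 1; funext y
            rw [neg_div, stdNormalCdf_neg, stdNormalPdf_neg]
        _ = (∫ y : ℝ, stdNormalPdf y) - ∫ y : ℝ, stdNormalCdf (y / a) * stdNormalPdf y := by
            rw [← integral_sub integrable_stdNormalPdf hint0]
            congr 1; funext y; ring
        _ = 1 - F 0 := by rw [integral_stdNormalPdf, e0]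
    linarith
  have hG0 : G 0 = 1 / 2 := by
    simp only [hG, zero_div]
    exact stdNormalCdf_zero
  have := hconst b
  rw [hF0, hG0] at this
  have hFG : F b = G b := by linarith
  exact hFG
end

section
/- Let μ be a real number, σ > 0, s > 0, and n > 0. Let δ(y₁, y₂) = 1[y₁ > y₂]. Then the iterated integral of δ(y₁, y₂)·m₁ + (1 − δ(y₁, y₂))·m₂, where y₁ is integrated against gaussianReal m₁ (s²/n), y₂ against gaussianReal m₂ (s²/n), m₁ against gaussianReal μ σ², and m₂ against gaussianReal μ σ², equals μ + σ²/(√π·√(σ² + s²/n)), which equals μ + √2·σ²/(√π·√(2σ² + 2s²/n)). -/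
open MeasureTheory Real ProbabilityTheory Set
open scoped NNReal ENNReal

namespace TR

lemma pdf_symm (a b : ℝ) (w : ℝ≥0) : gaussianPDFReal a w b = gaussianPDFReal b w a := by
  simp only [gaussianPDFReal]
  ring_nf

lemma pdf_shift (a b c : ℝ) (w : ℝ≥0) :
    gaussianPDFReal (a - c) w b = gaussianPDFReal (b + c) w a := by
  simp only [gaussianPDFReal]
  ring_nf

lemma pdf_mul (m₁ m₂ x : ℝ) {w₁ w₂ : ℝ≥0} (h₁ : w₁ ≠ 0) (h₂ : w₂ ≠ 0) :
    gaussianPDFReal m₁ w₁ x * gaussianPDFReal m₂ w₂ x =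
      gaussianPDFReal m₂ (w₁ + w₂) m₁ *
        gaussianPDFReal ((w₂ * m₁ + w₁ * m₂) / (w₁ + w₂)) (w₁ * w₂ / (w₁ + w₂)) x := by
  have ha : (0:ℝ) < w₁ := lt_of_le_of_ne w₁.coe_nonneg (by exact_mod_cast (Ne.symm h₁))
  have hb : (0:ℝ) < w₂ := lt_of_le_of_ne w₂.coe_nonneg (by exact_mod_cast (Ne.symm h₂))
  simp only [gaussianPDFReal, NNReal.coe_add, NNReal.coe_mul, NNReal.coe_div]
  rw [mul_mul_mul_comm, ← Real.exp_add, mul_mul_mul_comm, ← Real.exp_add]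
  have hπ : (0:ℝ) < π := Real.pi_pos
  congr 1
  · rw [← mul_inv, ← mul_inv, ← Real.sqrt_mul (by positivity), ← Real.sqrt_mul (by positivity)]
    congr 2
    field_simp
  · congr 1
    field_simp
    ring

end TR
namespace TR
open scoped NNReal ENNReal
variable {w w₁ w₂ : ℝ≥0}

lemma gaussianReal_eq_withDensity (m : ℝ) (hw : w ≠ 0) :
    gaussianReal m w =
      volume.withDensity (fun x => ((gaussianPDFReal m w x).toNNReal : ℝ≥0∞)) := by
  rw [gaussianReal_of_var_ne_zero m hw]; rfl

lemma integral_gaussianReal (hw : w ≠ 0) (m : ℝ) (f : ℝ → ℝ) :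
    ∫ x, f x ∂(gaussianReal m w) = ∫ x, gaussianPDFReal m w x * f x := by
  rw [gaussianReal_eq_withDensity m hw,
    integral_withDensity_eq_integral_smul ((measurable_gaussianPDFReal m w).real_toNNReal) f]
  congr 1
  funext x
  simp [NNReal.smul_def, Real.coe_toNNReal _ (gaussianPDFReal_nonneg m w x)]

lemma integrable_gaussianReal_iff (hw : w ≠ 0) (m : ℝ) (f : ℝ → ℝ) :
    Integrable f (gaussianReal m w) ↔
      Integrable (fun x => gaussianPDFReal m w x * f x) volume := by
  rw [gaussianReal_eq_withDensity m hw,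
    integrable_withDensity_iff_integrable_smul ((measurable_gaussianPDFReal m w).real_toNNReal)]
  constructor <;> intro h <;> refine h.congr (Filter.Eventually.of_forall fun x => ?_) <;>
    simp [NNReal.smul_def, Real.coe_toNNReal _ (gaussianPDFReal_nonneg m w x)]

end TR
namespace TR
open scoped NNReal ENNReal
variable {w w₁ w₂ : ℝ≥0}

lemma bar_ne_zero (h₁ : w₁ ≠ 0) (h₂ : w₂ ≠ 0) : w₁ * w₂ / (w₁ + w₂) ≠ 0 := by
  rw [ne_eq, div_eq_zero_iff]
  push_neg
  refine ⟨mul_ne_zero h₁ h₂, ?_⟩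
  simp [add_eq_zero, h₁]

lemma integral_pdf_mul (m₁ m₂ : ℝ) (h₁ : w₁ ≠ 0) (h₂ : w₂ ≠ 0) :
    ∫ x, gaussianPDFReal m₁ w₁ x * gaussianPDFReal m₂ w₂ x =
      gaussianPDFReal m₂ (w₁ + w₂) m₁ := by
  simp_rw [pdf_mul m₁ m₂ _ h₁ h₂]
  rw [integral_const_mul, integral_gaussianPDFReal_eq_one _ (bar_ne_zero h₁ h₂), mul_one]

lemma map_neg (m : ℝ) (w : ℝ≥0) :
    (gaussianReal m w).map (fun x => -x) = gaussianReal (-m) w := by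
  have h := gaussianReal_map_const_mul (μ := m) (v := w) (-1)
  have h1 : (NNReal.mk ((-1:ℝ)^2) (sq_nonneg _)) = 1 := by ext; norm_num
  rw [h1, one_mul] at h
  simpa [neg_one_mul] using h

lemma integrable_id_gaussianReal (hw : w ≠ 0) (m : ℝ) :
    Integrable (fun x => x) (gaussianReal m w) := by
  have hwp : (0:ℝ) < w := lt_of_le_of_ne w.coe_nonneg (by exact_mod_cast (Ne.symm hw))
  rw [integrable_gaussianReal_iff hw]
  have hb : (0:ℝ) < (2*(w:ℝ))⁻¹ := by positivity
  have g_int : Integrable (fun x : ℝ => x * rexp (-(2*(w:ℝ))⁻¹ * x^2) +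
      m * rexp (-(2*(w:ℝ))⁻¹ * x^2)) :=
    (integrable_mul_exp_neg_mul_sq hb).add ((integrable_exp_neg_mul_sq hb).const_mul m)
  have g_int2 := (g_int.comp_sub_right m).const_mul (√(2*π*(w:ℝ)))⁻¹
  refine g_int2.congr (Filter.Eventually.of_forall fun x => ?_)
  simp only [gaussianPDFReal]
  rw [show -(x-m)^2/(2*(w:ℝ)) = -(2*(w:ℝ))⁻¹ * (x-m)^2 by ring]
  ring

lemma integral_id_gaussianReal (hw : w ≠ 0) (m : ℝ) :
    ∫ x, x ∂(gaussianReal m w) = m := by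
  have h0 : ∫ x, x ∂(gaussianReal 0 w) = 0 := by
    have hm : (gaussianReal 0 w).map (fun x => -x) = gaussianReal 0 w := by
      simpa using map_neg 0 w
    have hA : ∫ x, x ∂(gaussianReal 0 w) = - ∫ x, x ∂(gaussianReal 0 w) := by
      conv_lhs => rw [← hm]
      rw [integral_map (f := fun x : ℝ => x) measurable_neg.aemeasurable measurable_id.aestronglyMeasurable]
      exact integral_neg _
    linarith
  have hmap : (gaussianReal 0 w).map (· + m) = gaussianReal m w := by
    simpa using gaussianReal_map_add_const (μ := 0) (v := w) m
  rw [← hmap, integral_map (f := fun x : ℝ => x) (measurable_add_const m).aemeasurable measurable_id.aestronglyMeasurable]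
  rw [integral_add (integrable_id_gaussianReal hw 0) (integrable_const m), h0,
    integral_const, zero_add]
  simp

lemma integral_Ioi_id_mul_pdf (hw : w ≠ 0) :
    ∫ x in Ioi (0:ℝ), x * gaussianPDFReal 0 w x = (w:ℝ) / Real.sqrt (2*π*w) := by
  have hwp : (0:ℝ) < w := lt_of_le_of_ne w.coe_nonneg (by exact_mod_cast (Ne.symm hw))
  set b : ℝ := (2*(w:ℝ))⁻¹ with hb_def
  have hb : (0:ℝ) < b := by positivity
  have key : ∫ x in Ioi (0:ℝ), x * rexp (-b * x^2) = (w:ℝ) := by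
    have hderiv : ∀ x ∈ Ici (0:ℝ),
        HasDerivAt (fun x => -(w:ℝ) * rexp (-b*x^2)) (x * rexp (-b*x^2)) x := by
      intro x _
      have h1 : HasDerivAt (fun x : ℝ => -b*x^2) (-b*(2*x)) x := by
        simpa using (hasDerivAt_pow 2 x).const_mul (-b)
      have h2 := (h1.exp).const_mul (-(w:ℝ))
      refine h2.congr_deriv ?_
      rw [hb_def]
      field_simp
    have htend : Filter.Tendsto (fun x => -(w:ℝ) * rexp (-b*x^2)) Filter.atTop (nhds 0) := by
      have h3 : Filter.Tendsto (fun x : ℝ => -b*x^2) Filter.atTop Filter.atBot := by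
        have h4 := Filter.Tendsto.const_mul_atTop hb
          (Filter.tendsto_pow_atTop (α := ℝ) (n := 2) (by norm_num))
        have h5 := Filter.tendsto_neg_atTop_atBot.comp h4
        have he : (fun x : ℝ => -b*x^2) = Neg.neg ∘ fun x : ℝ => b*x^2 := by
          funext x; simp [Function.comp, neg_mul]
        rw [he]; exact h5
      have h6 := (Real.tendsto_exp_atBot.comp h3).const_mul (-(w:ℝ))
      simpa [Function.comp] using h6
    have := integral_Ioi_of_hasDerivAt_of_tendsto'
      hderiv (integrable_mul_exp_neg_mul_sq hb).integrableOn htend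
    rw [this]
    norm_num
  calc ∫ x in Ioi (0:ℝ), x * gaussianPDFReal 0 w x
      = ∫ x in Ioi (0:ℝ), (√(2*π*(w:ℝ)))⁻¹ * (x * rexp (-b * x^2)) := by
        refine setIntegral_congr_fun measurableSet_Ioi fun x _ => ?_
        simp only [gaussianPDFReal, sub_zero]
        rw [show -x^2/(2*(w:ℝ)) = -b*x^2 by rw [hb_def]; ring]
        ring
    _ = (√(2*π*(w:ℝ)))⁻¹ * ∫ x in Ioi (0:ℝ), x * rexp (-b * x^2) := integral_const_mul _ _
    _ = (w:ℝ) / Real.sqrt (2*π*w) := by rw [key, inv_mul_eq_div]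

end TR
namespace TR
open scoped NNReal ENNReal
variable {w w₁ w₂ : ℝ≥0}

lemma add_ne_zero' (h₁ : w₁ ≠ 0) : w₁ + w₂ ≠ 0 := by
  simp [add_eq_zero, h₁]

lemma map_sub_prod (m₁ m₂ : ℝ) (h₁ : w₁ ≠ 0) (h₂ : w₂ ≠ 0) :
    Measure.map (fun p : ℝ × ℝ => p.1 - p.2)
        ((gaussianReal m₁ w₁).prod (gaussianReal m₂ w₂)) =
      gaussianReal (m₁ - m₂) (w₁ + w₂) := by
  have h12 : w₁ + w₂ ≠ 0 := add_ne_zero' h₁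
  have hmeas : Measurable (fun p : ℝ × ℝ => p.1 - p.2) := measurable_fst.sub measurable_snd
  have hpdf2 : Measurable (fun p : ℝ × ℝ => gaussianPDF (p.1 - m₂) w₂ p.2) := by
    unfold gaussianPDF gaussianPDFReal
    exact ((((measurable_snd.sub (measurable_fst.sub_const m₂)).pow_const 2).neg.div_const
      _).exp.const_mul _).ennreal_ofReal
  refine Measure.ext fun A hA => ?_
  rw [Measure.map_apply hmeas hA, Measure.prod_apply (hmeas hA)]
  have hmapx : ∀ x : ℝ,
      gaussianReal m₂ w₂ (Prod.mk x ⁻¹' ((fun p : ℝ × ℝ => p.1 - p.2) ⁻¹' A)) =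
        gaussianReal (x - m₂) w₂ A := by
    intro x
    have hn : (gaussianReal m₂ w₂).map (fun y => x - y) = gaussianReal (x - m₂) w₂ := by
      have e1 : (fun y : ℝ => x - y) = (fun y : ℝ => y + x) ∘ (fun y : ℝ => -y) := by
        funext y; simp [Function.comp, sub_eq_neg_add]
      rw [e1, ← Measure.map_map (measurable_add_const x) measurable_neg, map_neg,
        gaussianReal_map_add_const]
      congr 1; ring
    rw [← hn, Measure.map_apply (by fun_prop) hA]
    rfl
  simp_rw [hmapx, gaussianReal_apply _ h₂ A]
  rw [gaussianReal_eq_withDensity m₁ h₁]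
  have hd : Measurable (fun x : ℝ => ((gaussianPDFReal m₁ w₁ x).toNNReal : ℝ≥0∞)) :=
    (measurable_gaussianPDFReal m₁ w₁).real_toNNReal.coe_nnreal_ennreal
  rw [lintegral_withDensity_eq_lintegral_mul _ hd
    (Measurable.lintegral_prod_right' (ν := volume.restrict A) hpdf2)]
  have hcoe : ∀ x : ℝ, ((gaussianPDFReal m₁ w₁ x).toNNReal : ℝ≥0∞) = gaussianPDF m₁ w₁ x :=
    fun x => rfl
  calc ∫⁻ x, ((fun x : ℝ => ((gaussianPDFReal m₁ w₁ x).toNNReal : ℝ≥0∞)) *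
        (fun x => ∫⁻ z in A, gaussianPDF (x - m₂) w₂ z)) x ∂volume
      = ∫⁻ x, ∫⁻ z in A, gaussianPDF m₁ w₁ x * gaussianPDF (x - m₂) w₂ z ∂volume ∂volume := by
        refine lintegral_congr fun x => ?_
        simp only [Pi.mul_apply, hcoe]
        exact (lintegral_const_mul _ (measurable_gaussianPDF (x - m₂) w₂)).symm
    _ = ∫⁻ z in A, ∫⁻ x, gaussianPDF m₁ w₁ x * gaussianPDF (x - m₂) w₂ z ∂volume ∂volume := by
        refine lintegral_lintegral_swap ?_
        exact (((measurable_gaussianPDF m₁ w₁).comp measurable_fst).mul hpdf2).aemeasurable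
    _ = ∫⁻ z in A, gaussianPDF (m₁ - m₂) (w₁ + w₂) z ∂volume := by
        refine setLIntegral_congr_fun hA (fun z _ => ?_)
        have e2 : ∀ x : ℝ, gaussianPDF m₁ w₁ x * gaussianPDF (x - m₂) w₂ z =
            ENNReal.ofReal (gaussianPDFReal (z + m₂) (w₁ + w₂) m₁ *
              gaussianPDFReal ((w₂ * m₁ + w₁ * (z + m₂)) / (w₁ + w₂)) (w₁ * w₂ / (w₁ + w₂)) x) := by
          intro x
          rw [gaussianPDF, gaussianPDF, ← ENNReal.ofReal_mul (gaussianPDFReal_nonneg _ _ _)]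
          rw [pdf_shift x z m₂ w₂, pdf_mul _ _ _ h₁ h₂]
        simp_rw [e2, ENNReal.ofReal_mul (gaussianPDFReal_nonneg _ _ _)]
        rw [lintegral_const_mul _ (measurable_gaussianPDFReal _ _).ennreal_ofReal,
          lintegral_gaussianPDFReal_eq_one _ (bar_ne_zero h₁ h₂), mul_one,
          ← pdf_shift m₁ z m₂]
        rfl
    _ = gaussianReal (m₁ - m₂) (w₁ + w₂) A := (gaussianReal_apply _ h12 A).symm

end TR
namespace TR
open scoped NNReal ENNReal
variable {w w₁ w₂ : ℝ≥0}

noncomputable def K (w : ℝ≥0) (d : ℝ) : ℝ := ((gaussianReal d w) (Set.Ioi 0)).toReal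

lemma K_eq (w : ℝ≥0) (d : ℝ) : K w d = ((gaussianReal 0 w) (Set.Ioi (-d))).toReal := by
  have hmap : (gaussianReal 0 w).map (· + d) = gaussianReal d w := by
    simpa using gaussianReal_map_add_const (μ := 0) (v := w) d
  rw [K, ← hmap, Measure.map_apply (measurable_add_const d) measurableSet_Ioi]
  congr 2
  ext y
  simp only [Set.mem_preimage, Set.mem_Ioi]
  constructor <;> intro h <;> linarith

lemma K_mono (w : ℝ≥0) : Monotone (K w) := by
  intro a b hab
  rw [K_eq w a, K_eq w b]
  exact ENNReal.toReal_mono (measure_ne_top _ _)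
    (measure_mono (Set.Ioi_subset_Ioi (neg_le_neg hab)))

lemma K_measurable (w : ℝ≥0) : Measurable (K w) := (K_mono w).measurable

lemma K_nonneg (w : ℝ≥0) (d : ℝ) : 0 ≤ K w d := ENNReal.toReal_nonneg

lemma K_le_one (w : ℝ≥0) (d : ℝ) : K w d ≤ 1 := by
  rw [K]
  have h := prob_le_one (μ := gaussianReal d w) (s := Set.Ioi 0)
  calc ((gaussianReal d w) (Set.Ioi 0)).toReal ≤ (1 : ℝ≥0∞).toReal :=
        ENNReal.toReal_mono ENNReal.one_ne_top h
    _ = 1 := ENNReal.toReal_one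

lemma K_as_integral (hw : w ≠ 0) (d : ℝ) :
    K w d = ∫ x in Set.Ioi (0:ℝ), gaussianPDFReal d w x := by
  rw [K, gaussianReal_apply_eq_integral _ hw, ENNReal.toReal_ofReal
    (setIntegral_nonneg measurableSet_Ioi fun x _ => gaussianPDFReal_nonneg _ _ _)]

lemma integral_sub_gaussian (h₁ : w₁ ≠ 0) (h₂ : w₂ ≠ 0) (m₁ m₂ : ℝ) {f : ℝ → ℝ}
    (hf : Integrable f (gaussianReal (m₁ - m₂) (w₁ + w₂))) :
    ∫ x, ∫ y, f (x - y) ∂(gaussianReal m₂ w₂) ∂(gaussianReal m₁ w₁) =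
      ∫ z, f z ∂(gaussianReal (m₁ - m₂) (w₁ + w₂)) := by
  have hmap := map_sub_prod m₁ m₂ h₁ h₂
  have hmeas : Measurable (fun p : ℝ × ℝ => p.1 - p.2) := measurable_fst.sub measurable_snd
  have hfm : AEStronglyMeasurable f
      (Measure.map (fun p : ℝ × ℝ => p.1 - p.2)
        ((gaussianReal m₁ w₁).prod (gaussianReal m₂ w₂))) := by
    rw [hmap]; exact hf.aestronglyMeasurable
  have hfi : Integrable (fun p : ℝ × ℝ => f (p.1 - p.2))
      ((gaussianReal m₁ w₁).prod (gaussianReal m₂ w₂)) := by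
    rw [← hmap] at hf
    exact (integrable_map_measure hfm hmeas.aemeasurable).mp hf
  conv_rhs => rw [← hmap]
  rw [integral_map hmeas.aemeasurable hfm]
  exact (integral_prod _ hfi).symm

end TR
namespace TR
open scoped NNReal ENNReal
variable {w₁ w₂ : ℝ≥0}

lemma integral_mul_K (hW : w₁ ≠ 0) (hW' : w₂ ≠ 0) :
    ∫ d, d * K w₂ d ∂(gaussianReal 0 w₁) =
      (w₁:ℝ) / Real.sqrt (2*π*((w₁:ℝ)+(w₂:ℝ))) := by
  have hT : w₁ + w₂ ≠ 0 := add_ne_zero' hW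
  have hbar : w₁ * w₂ / (w₁ + w₂) ≠ 0 := bar_ne_zero hW hW'
  have hTpos : (0:ℝ) < (w₁:ℝ) + (w₂:ℝ) := by
    have : (0:ℝ) < (w₁:ℝ) := lt_of_le_of_ne w₁.coe_nonneg (by exact_mod_cast (Ne.symm hW))
    have h2 : (0:ℝ) ≤ (w₂:ℝ) := w₂.coe_nonneg
    linarith
  have hid : Integrable (fun d => gaussianPDFReal 0 w₁ d * d) volume :=
    (integrable_gaussianReal_iff hW 0 _).mp (integrable_id_gaussianReal hW 0)
  have habs : Integrable (fun d => gaussianPDFReal 0 w₁ d * |d|) volume := by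
    refine hid.abs.congr (Filter.Eventually.of_forall fun d => ?_)
    show |gaussianPDFReal 0 w₁ d * d| = _
    rw [abs_mul, abs_of_nonneg (gaussianPDFReal_nonneg _ _ _)]
  set F : ℝ → ℝ → ℝ :=
    fun d x => gaussianPDFReal 0 w₁ d * d * gaussianPDFReal d w₂ x with hF_def
  have hcont : Continuous (Function.uncurry F) := by
    simp only [hF_def, Function.uncurry, gaussianPDFReal]
    fun_prop
  set ν : Measure ℝ := volume.restrict (Set.Ioi (0:ℝ)) with hν_def
  rw [integral_gaussianReal hW 0]
  have h1 : ∀ d : ℝ, gaussianPDFReal 0 w₁ d * (d * K w₂ d) = ∫ x, F d x ∂ν := by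
    intro d
    rw [K_as_integral hW',
      show gaussianPDFReal 0 w₁ d * (d * ∫ x in Set.Ioi (0:ℝ), gaussianPDFReal d w₂ x) =
        (gaussianPDFReal 0 w₁ d * d) * ∫ x in Set.Ioi (0:ℝ), gaussianPDFReal d w₂ x from by ring,
      ← integral_const_mul]
  simp_rw [h1]
  have hF_int : Integrable (Function.uncurry F) (volume.prod ν) := by
    rw [integrable_prod_iff hcont.aestronglyMeasurable]
    constructor
    · refine Filter.Eventually.of_forall fun d => ?_
      exact ((integrable_gaussianPDFReal d w₂).restrict).const_mul
        (gaussianPDFReal 0 w₁ d * d)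
    · have hsm2 : StronglyMeasurable fun d => ∫ x, ‖F d x‖ ∂ν :=
        (hcont.norm.stronglyMeasurable).integral_prod_right'
      refine Integrable.mono' habs hsm2.aestronglyMeasurable
        (Filter.Eventually.of_forall fun d => ?_)
      simp only [Function.uncurry_apply_pair]
      have hnn : (0:ℝ) ≤ ∫ x, ‖F d x‖ ∂ν := integral_nonneg fun x => norm_nonneg _
      rw [Real.norm_of_nonneg hnn]
      have he : ∀ x, ‖F d x‖ = |gaussianPDFReal 0 w₁ d * d| * gaussianPDFReal d w₂ x := by
        intro x
        rw [hF_def]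
        simp only
        rw [Real.norm_eq_abs, abs_mul, abs_of_nonneg (gaussianPDFReal_nonneg d w₂ x)]
      calc ∫ x, ‖F d x‖ ∂ν
          = |gaussianPDFReal 0 w₁ d * d| * ∫ x, gaussianPDFReal d w₂ x ∂ν := by
            simp_rw [he]; exact integral_const_mul _ _
        _ ≤ |gaussianPDFReal 0 w₁ d * d| * 1 := by
            refine mul_le_mul_of_nonneg_left ?_ (abs_nonneg _)
            have hle := setIntegral_le_integral (s := Set.Ioi (0:ℝ))
              (integrable_gaussianPDFReal d w₂)
              (Filter.Eventually.of_forall fun x => gaussianPDFReal_nonneg _ _ _)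
            rwa [integral_gaussianPDFReal_eq_one _ hW'] at hle
        _ = gaussianPDFReal 0 w₁ d * |d| := by
            rw [mul_one, abs_mul, abs_of_nonneg (gaussianPDFReal_nonneg _ _ _)]
  rw [integral_integral_swap hF_int]
  have h2 : ∀ x : ℝ, (∫ d, F d x) =
      gaussianPDFReal 0 (w₁+w₂) x * (((w₂:ℝ) * 0 + (w₁:ℝ) * x) / ((w₁:ℝ)+(w₂:ℝ))) := by
    intro x
    have e : ∀ d : ℝ, F d x = gaussianPDFReal x (w₁+w₂) 0 *
        (gaussianPDFReal (((w₂:ℝ) * 0 + (w₁:ℝ) * x) / ((w₁:ℝ)+(w₂:ℝ))) (w₁*w₂/(w₁+w₂)) d * d) := by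
      intro d
      rw [hF_def]
      simp only
      rw [pdf_symm d x w₂,
        show gaussianPDFReal 0 w₁ d * d * gaussianPDFReal x w₂ d =
          (gaussianPDFReal 0 w₁ d * gaussianPDFReal x w₂ d) * d from by ring,
        pdf_mul 0 x d hW hW']
      ring
    simp_rw [e]
    rw [integral_const_mul]
    have hmean : (∫ d, gaussianPDFReal (((w₂:ℝ) * 0 + (w₁:ℝ) * x) / ((w₁:ℝ)+(w₂:ℝ)))
        (w₁*w₂/(w₁+w₂)) d * d) = ((w₂:ℝ) * 0 + (w₁:ℝ) * x) / ((w₁:ℝ)+(w₂:ℝ)) := by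
      rw [← integral_gaussianReal hbar, integral_id_gaussianReal hbar]
    rw [hmean, pdf_symm x 0 (w₁+w₂)]
  simp_rw [h2]
  have hcoe : ((w₁+w₂ : ℝ≥0) : ℝ) = (w₁:ℝ) + (w₂:ℝ) := by push_cast; ring
  calc ∫ x, gaussianPDFReal 0 (w₁+w₂) x *
        (((w₂:ℝ) * 0 + (w₁:ℝ) * x) / ((w₁:ℝ)+(w₂:ℝ))) ∂ν
      = ((w₁:ℝ)/((w₁:ℝ)+(w₂:ℝ))) * ∫ x, x * gaussianPDFReal 0 (w₁+w₂) x ∂ν := by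
        rw [← integral_const_mul]
        refine integral_congr_ae (Filter.Eventually.of_forall fun x => ?_)
        ring
    _ = ((w₁:ℝ)/((w₁:ℝ)+(w₂:ℝ))) *
          (((w₁+w₂ : ℝ≥0):ℝ) / Real.sqrt (2*π*((w₁+w₂ : ℝ≥0):ℝ))) := by
        rw [hν_def, integral_Ioi_id_mul_pdf hT]
    _ = (w₁:ℝ) / Real.sqrt (2*π*((w₁:ℝ)+(w₂:ℝ))) := by
        rw [hcoe]
        have hs : Real.sqrt (2*π*((w₁:ℝ)+(w₂:ℝ))) ≠ 0 := by
          refine ne_of_gt (Real.sqrt_pos.mpr ?_)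
          have := Real.pi_pos
          positivity
        field_simp

end TR
open scoped NNReal ENNReal

theorem expected_roll_profit_symmetric (μ σ s n : ℝ)
    (hσ : 0 < σ) (hs : 0 < s) (hn : 0 < n) :
    (∫ m₁, (∫ m₂, (∫ y₁, (∫ y₂,
            ((if y₁ > y₂ then (1 : ℝ) else 0) * m₁ +
              (1 - (if y₁ > y₂ then (1 : ℝ) else 0)) * m₂)
              ∂(gaussianReal m₂ ((s ^ 2 / n).toNNReal)))
            ∂(gaussianReal m₁ ((s ^ 2 / n).toNNReal)))
          ∂(gaussianReal μ ((σ ^ 2).toNNReal)))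
        ∂(gaussianReal μ ((σ ^ 2).toNNReal))) =
      μ + σ ^ 2 / (Real.sqrt Real.pi * Real.sqrt (σ ^ 2 + s ^ 2 / n)) ∧
    μ + σ ^ 2 / (Real.sqrt Real.pi * Real.sqrt (σ ^ 2 + s ^ 2 / n)) =
      μ + Real.sqrt 2 * σ ^ 2 /
        (Real.sqrt Real.pi * Real.sqrt (2 * σ ^ 2 + 2 * s ^ 2 / n)) := by
  have hπ := Real.pi_pos
  have hv : (0:ℝ) < s ^ 2 / n := div_pos (pow_pos hs 2) hn
  have hσ2 : (0:ℝ) < σ ^ 2 := pow_pos hσ 2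
  set V : ℝ≥0 := (s ^ 2 / n).toNNReal with hV_def
  set Sg : ℝ≥0 := (σ ^ 2).toNNReal with hSg_def
  have hV : V ≠ 0 := (Real.toNNReal_pos.mpr hv).ne'
  have hSg : Sg ≠ 0 := (Real.toNNReal_pos.mpr hσ2).ne'
  have hVV : V + V ≠ 0 := TR.add_ne_zero' hV
  have hSS : Sg + Sg ≠ 0 := TR.add_ne_zero' hSg
  have hVc : (V:ℝ) = s ^ 2 / n := Real.coe_toNNReal _ hv.le
  have hSgc : (Sg:ℝ) = σ ^ 2 := Real.coe_toNNReal _ hσ2.le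
  set g : ℝ → ℝ := fun d => d * TR.K (V+V) d with hg_def
  have hg_meas : Measurable g := measurable_id.mul (TR.K_measurable _)
  have hg_bound : ∀ d, ‖g d‖ ≤ |d| := by
    intro d
    rw [hg_def]
    simp only [Real.norm_eq_abs, abs_mul]
    calc |d| * |TR.K (V+V) d| ≤ |d| * 1 := by
          refine mul_le_mul_of_nonneg_left ?_ (abs_nonneg d)
          rw [abs_of_nonneg (TR.K_nonneg _ _)]
          exact TR.K_le_one _ _
      _ = |d| := mul_one _
  -- inner double integral over y₁, y₂
  have hinner : ∀ m₁ m₂ : ℝ,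
      (∫ y₁, (∫ y₂, ((if y₁ > y₂ then (1 : ℝ) else 0) * m₁ +
          (1 - (if y₁ > y₂ then (1 : ℝ) else 0)) * m₂)
          ∂(gaussianReal m₂ V)) ∂(gaussianReal m₁ V)) = m₂ + g (m₁ - m₂) := by
    intro m₁ m₂
    set c : ℝ := m₁ - m₂ with hc_def
    set f : ℝ → ℝ := Set.indicator (Set.Ioi (0:ℝ)) (fun _ => c) with hf_def
    have hpoint : ∀ y₁ y₂ : ℝ,
        ((if y₁ > y₂ then (1 : ℝ) else 0) * m₁ +
          (1 - (if y₁ > y₂ then (1 : ℝ) else 0)) * m₂) = m₂ + f (y₁ - y₂) := by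
      intro y₁ y₂
      by_cases h : y₂ < y₁
      · rw [if_pos h, hf_def, Set.indicator_of_mem (by simp [Set.mem_Ioi]; linarith)]
        rw [hc_def]; ring
      · rw [if_neg h, hf_def,
          Set.indicator_of_notMem (by simp only [Set.mem_Ioi, sub_pos]; exact h)]
        ring
    have hind : ∀ y₁ : ℝ, (fun y₂ => f (y₁ - y₂)) = Set.indicator (Set.Iio y₁) (fun _ => c) := by
      intro y₁
      funext y₂
      by_cases h : y₂ < y₁
      · rw [hf_def, Set.indicator_of_mem (by simp [Set.mem_Ioi]; linarith),
          Set.indicator_of_mem (Set.mem_Iio.mpr h)]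
      · rw [hf_def, Set.indicator_of_notMem (by simp only [Set.mem_Ioi, sub_pos]; exact h),
          Set.indicator_of_notMem (by simpa [Set.mem_Iio] using h)]
    have hstep1 : ∀ y₁ : ℝ,
        (∫ y₂, (m₂ + f (y₁ - y₂)) ∂(gaussianReal m₂ V)) =
          m₂ + ((gaussianReal m₂ V) (Set.Iio y₁)).toReal * c := by
      intro y₁
      have hfi : Integrable (fun y₂ => f (y₁ - y₂)) (gaussianReal m₂ V) := by
        rw [hind y₁]
        exact (integrable_const c).indicator measurableSet_Iio
      rw [integral_add (integrable_const m₂) hfi, integral_const]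
      congr 1
      · simp
      · rw [hind y₁, integral_indicator_const c measurableSet_Iio, smul_eq_mul, measureReal_def]
    have hψ_mono : Monotone (fun y₁ => ((gaussianReal m₂ V) (Set.Iio y₁)).toReal) := by
      intro a b hab
      exact ENNReal.toReal_mono (measure_ne_top _ _) (measure_mono (Set.Iio_subset_Iio hab))
    have hψ_int : Integrable (fun y₁ => ((gaussianReal m₂ V) (Set.Iio y₁)).toReal * c)
        (gaussianReal m₁ V) := by
      refine Integrable.mono' (integrable_const |c|)
        ((hψ_mono.measurable.mul_const c).aestronglyMeasurable)
        (Filter.Eventually.of_forall fun y₁ => ?_)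
      rw [Real.norm_eq_abs, abs_mul, abs_of_nonneg ENNReal.toReal_nonneg]
      calc ((gaussianReal m₂ V) (Set.Iio y₁)).toReal * |c| ≤ 1 * |c| := by
            refine mul_le_mul_of_nonneg_right ?_ (abs_nonneg c)
            calc ((gaussianReal m₂ V) (Set.Iio y₁)).toReal ≤ (1:ℝ≥0∞).toReal :=
                  ENNReal.toReal_mono ENNReal.one_ne_top prob_le_one
              _ = 1 := ENNReal.toReal_one
        _ = |c| := one_mul _
    have hfz : Integrable f (gaussianReal (m₁ - m₂) (V+V)) :=
      (integrable_const c).indicator measurableSet_Ioi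
    have hrw : (fun y₁ => ∫ y₂, ((if y₁ > y₂ then (1 : ℝ) else 0) * m₁ +
          (1 - (if y₁ > y₂ then (1 : ℝ) else 0)) * m₂) ∂(gaussianReal m₂ V)) =
        fun y₁ => m₂ + ((gaussianReal m₂ V) (Set.Iio y₁)).toReal * c := by
      funext y₁
      rw [← hstep1 y₁]
      exact integral_congr_ae (Filter.Eventually.of_forall fun y₂ => hpoint y₁ y₂)
    rw [hrw, integral_add (integrable_const m₂) hψ_int, integral_const]
    simp only [measureReal_def, measure_univ, ENNReal.toReal_one, one_smul]
    congr 1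
    have hrev : ∀ y₁ : ℝ, ((gaussianReal m₂ V) (Set.Iio y₁)).toReal * c =
        ∫ y₂, f (y₁ - y₂) ∂(gaussianReal m₂ V) := by
      intro y₁
      rw [hind y₁, integral_indicator_const c measurableSet_Iio, smul_eq_mul, measureReal_def]
    simp_rw [hrev]
    rw [TR.integral_sub_gaussian hV hV m₁ m₂ hfz, hf_def,
      integral_indicator_const c measurableSet_Ioi, smul_eq_mul, measureReal_def, hg_def]
    simp only [TR.K]
    rw [mul_comm]
  -- integrability facts for the outer integrals
  have hgint : ∀ m₁ : ℝ, Integrable (fun m₂ => g (m₁ - m₂)) (gaussianReal μ Sg) := by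
    intro m₁
    refine Integrable.mono'
      (((integrable_const m₁).sub (TR.integrable_id_gaussianReal hSg μ)).abs)
      ((hg_meas.comp (measurable_const.sub measurable_id)).aestronglyMeasurable)
      (Filter.Eventually.of_forall fun m₂ => ?_)
    exact hg_bound (m₁ - m₂)
  have hCμ : Integrable (fun m₂ : ℝ => |m₂|) (gaussianReal μ Sg) :=
    (TR.integrable_id_gaussianReal hSg μ).abs
  have hGsm : StronglyMeasurable (fun m₁ => ∫ m₂, g (m₁ - m₂) ∂(gaussianReal μ Sg)) := by
    exact StronglyMeasurable.integral_prod_right' (ν := gaussianReal μ Sg)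
      (f := fun p : ℝ × ℝ => g (p.1 - p.2))
      (hg_meas.comp (measurable_fst.sub measurable_snd)).stronglyMeasurable
  have hGint : Integrable (fun m₁ => ∫ m₂, g (m₁ - m₂) ∂(gaussianReal μ Sg))
      (gaussianReal μ Sg) := by
    refine Integrable.mono'
      ((TR.integrable_id_gaussianReal hSg μ).abs.add (integrable_const (∫ m₂, |m₂| ∂(gaussianReal μ Sg))))
      hGsm.aestronglyMeasurable (Filter.Eventually.of_forall fun m₁ => ?_)
    calc ‖∫ m₂, g (m₁ - m₂) ∂(gaussianReal μ Sg)‖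
        ≤ ∫ m₂, ‖g (m₁ - m₂)‖ ∂(gaussianReal μ Sg) := norm_integral_le_integral_norm _
      _ ≤ ∫ m₂, (|m₁| + |m₂|) ∂(gaussianReal μ Sg) := by
          refine integral_mono (hgint m₁).norm ((integrable_const |m₁|).add hCμ) fun m₂ => ?_
          calc ‖g (m₁ - m₂)‖ ≤ |m₁ - m₂| := hg_bound _
            _ ≤ |m₁| + |m₂| := abs_sub m₁ m₂
      _ = |m₁| + ∫ m₂, |m₂| ∂(gaussianReal μ Sg) := by
          rw [integral_add (integrable_const |m₁|) hCμ, integral_const]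
          simp
  have hgz : Integrable g (gaussianReal (μ - μ) (Sg + Sg)) := by
    rw [sub_self]
    refine Integrable.mono' ((TR.integrable_id_gaussianReal hSS 0).abs)
      hg_meas.aestronglyMeasurable (Filter.Eventually.of_forall fun d => hg_bound d)
  constructor
  · calc (∫ m₁, (∫ m₂, (∫ y₁, (∫ y₂,
            ((if y₁ > y₂ then (1 : ℝ) else 0) * m₁ +
              (1 - (if y₁ > y₂ then (1 : ℝ) else 0)) * m₂)
              ∂(gaussianReal m₂ V)) ∂(gaussianReal m₁ V))
          ∂(gaussianReal μ Sg)) ∂(gaussianReal μ Sg))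
        = ∫ m₁, (∫ m₂, (m₂ + g (m₁ - m₂)) ∂(gaussianReal μ Sg)) ∂(gaussianReal μ Sg) := by
          refine integral_congr_ae (Filter.Eventually.of_forall fun m₁ => ?_)
          exact integral_congr_ae (Filter.Eventually.of_forall fun m₂ => hinner m₁ m₂)
      _ = ∫ m₁, (μ + ∫ m₂, g (m₁ - m₂) ∂(gaussianReal μ Sg)) ∂(gaussianReal μ Sg) := by
          refine integral_congr_ae (Filter.Eventually.of_forall fun m₁ => ?_)
          simp only
          rw [integral_add (TR.integrable_id_gaussianReal hSg μ) (hgint m₁),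
            TR.integral_id_gaussianReal hSg μ]
      _ = μ + ∫ m₁, (∫ m₂, g (m₁ - m₂) ∂(gaussianReal μ Sg)) ∂(gaussianReal μ Sg) := by
          rw [integral_add (integrable_const μ) hGint, integral_const]
          simp
      _ = μ + ∫ z, g z ∂(gaussianReal (μ - μ) (Sg + Sg)) := by
          rw [TR.integral_sub_gaussian hSg hSg μ μ hgz]
      _ = μ + ((Sg + Sg : ℝ≥0):ℝ) /
            Real.sqrt (2 * π * (((Sg + Sg : ℝ≥0) : ℝ) + ((V + V : ℝ≥0) : ℝ))) := by
          rw [sub_self, hg_def, TR.integral_mul_K hSS hVV]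
      _ = μ + σ ^ 2 / (Real.sqrt Real.pi * Real.sqrt (σ ^ 2 + s ^ 2 / n)) := by
          have hc1 : ((Sg + Sg : ℝ≥0):ℝ) = 2 * σ ^ 2 := by push_cast [hSgc]; ring
          have hc2 : ((V + V : ℝ≥0):ℝ) = 2 * (s ^ 2 / n) := by push_cast [hVc]; ring
          rw [hc1, hc2]
          have hkey : Real.sqrt (2 * π * (2 * σ ^ 2 + 2 * (s ^ 2 / n))) =
              2 * (Real.sqrt π * Real.sqrt (σ ^ 2 + s ^ 2 / n)) := by
            rw [show 2 * π * (2 * σ ^ 2 + 2 * (s ^ 2 / n)) =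
                (2 * (Real.sqrt π * Real.sqrt (σ ^ 2 + s ^ 2 / n)))^2 from ?_]
            · exact Real.sqrt_sq (by positivity)
            · rw [mul_pow, mul_pow, Real.sq_sqrt hπ.le, Real.sq_sqrt (by positivity)]
              ring
          rw [hkey]
          congr 1
          have h1 : Real.sqrt π ≠ 0 := ne_of_gt (Real.sqrt_pos.mpr hπ)
          have h2 : Real.sqrt (σ ^ 2 + s ^ 2 / n) ≠ 0 :=
            ne_of_gt (Real.sqrt_pos.mpr (by positivity))
          field_simp
  · have h1 : Real.sqrt π ≠ 0 := ne_of_gt (Real.sqrt_pos.mpr hπ)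
    have h2 : (0:ℝ) < σ ^ 2 + s ^ 2 / n := by positivity
    have h3 : Real.sqrt (2 * σ ^ 2 + 2 * s ^ 2 / n) =
        Real.sqrt 2 * Real.sqrt (σ ^ 2 + s ^ 2 / n) := by
      rw [← Real.sqrt_mul (by norm_num : (0:ℝ) ≤ 2)]
      congr 1
      ring
    rw [h3]
    congr 1
    rw [div_eq_div_iff (by positivity) (by positivity)]
    ring
end

section
/- Let N > 0, s > 0, σ > 0 and μ be real numbers, and define Π(n) = N·μ + (N − 2n)·σ²/(√π·√(σ² + s²/n)) for n > 0, and n* = √(N·s²/(4σ²) + (3s²/(4σ²))²) − 3s²/(4σ²). Then 0 < n* < N/2 and for every n with 0 < n ≤ N/2, Π(n) ≤ Π(n*). -/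
open Real

theorem profit_maximizing_sample_size (N s σ μ : ℝ)
    (hN : 0 < N) (hs : 0 < s) (hσ : 0 < σ)
    (Profit : ℝ → ℝ)
    (hProfit : ∀ n, Profit n = N * μ + (N - 2 * n) * σ ^ 2 /
      (Real.sqrt Real.pi * Real.sqrt (σ ^ 2 + s ^ 2 / n)))
    (nstar : ℝ)
    (hnstar : nstar = Real.sqrt (N * s ^ 2 / (4 * σ ^ 2) +
      (3 * s ^ 2 / (4 * σ ^ 2)) ^ 2) - 3 * s ^ 2 / (4 * σ ^ 2)) :
    (0 < nstar ∧ nstar < N / 2) ∧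
      ∀ n, 0 < n → n ≤ N / 2 → Profit n ≤ Profit nstar := by
  have hσ2 : (0:ℝ) < σ ^ 2 := by positivity
  set A := N * s ^ 2 / (4 * σ ^ 2) + (3 * s ^ 2 / (4 * σ ^ 2)) ^ 2 with hA
  have hApos : 0 < A := by positivity
  have hsq : (nstar + 3 * s ^ 2 / (4 * σ ^ 2)) ^ 2 = A := by
    have : nstar + 3 * s ^ 2 / (4 * σ ^ 2) = Real.sqrt A := by rw [hnstar]; ring
    rw [this, Real.sq_sqrt hApos.le]
  rw [hA] at hsq
  -- key relation satisfied by nstar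
  have hkey : 4 * σ ^ 2 * nstar ^ 2 + 6 * s ^ 2 * nstar = N * s ^ 2 := by
    have h4 : (4 * σ ^ 2) ≠ 0 := by positivity
    have hc : 3 * s ^ 2 / (4 * σ ^ 2) * (4 * σ ^ 2) = 3 * s ^ 2 := div_mul_cancel₀ _ h4
    have hc2 : N * s ^ 2 / (4 * σ ^ 2) * (4 * σ ^ 2) = N * s ^ 2 := div_mul_cancel₀ _ h4
    linear_combination (4 * σ ^ 2) * hsq - 2 * nstar * hc + hc2
  -- positivity of nstar
  have hpos : 0 < nstar := by
    have h1 : 3 * s ^ 2 / (4 * σ ^ 2) < Real.sqrt A := by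
      rw [show (3 * s ^ 2 / (4 * σ ^ 2)) =
          Real.sqrt ((3 * s ^ 2 / (4 * σ ^ 2)) ^ 2) from (Real.sqrt_sq (by positivity)).symm]
      apply Real.sqrt_lt_sqrt (by positivity)
      have : 0 < N * s ^ 2 / (4 * σ ^ 2) := by positivity
      rw [hA]; linarith
    rw [hnstar]; linarith
  have hlt6 : nstar < N / 6 := by
    nlinarith [hkey, mul_pos hσ2 (mul_pos hpos hpos), mul_pos hs hs]
  have hltN2 : nstar < N / 2 := by linarith
  refine ⟨⟨hpos, hltN2⟩, ?_⟩
  intro n hn hnN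
  rw [hProfit, hProfit]
  have hπ : 0 < Real.sqrt Real.pi := Real.sqrt_pos.mpr Real.pi_pos
  have hargn : 0 < σ ^ 2 + s ^ 2 / n := by positivity
  have hargm : 0 < σ ^ 2 + s ^ 2 / nstar := by positivity
  set a := Real.sqrt (σ ^ 2 + s ^ 2 / n) with ha
  set b := Real.sqrt (σ ^ 2 + s ^ 2 / nstar) with hb
  have hapos : 0 < a := Real.sqrt_pos.mpr hargn
  have hbpos : 0 < b := Real.sqrt_pos.mpr hargm
  have ha2 : a ^ 2 = σ ^ 2 + s ^ 2 / n := Real.sq_sqrt hargn.le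
  have hb2 : b ^ 2 = σ ^ 2 + s ^ 2 / nstar := Real.sq_sqrt hargm.le
  have hmain : (N - 2 * n) * b ≤ (N - 2 * nstar) * a := by
    have h1 : 0 ≤ (N - 2 * n) * b := by
      apply mul_nonneg _ hbpos.le; linarith
    have h2 : 0 ≤ (N - 2 * nstar) * a := by
      apply mul_nonneg _ hapos.le; linarith
    have hsqle : ((N - 2 * n) * b) ^ 2 ≤ ((N - 2 * nstar) * a) ^ 2 := by
      have en : σ ^ 2 + s ^ 2 / n = (σ ^ 2 * n + s ^ 2) / n := by
        field_simp
      have em : σ ^ 2 + s ^ 2 / nstar = (σ ^ 2 * nstar + s ^ 2) / nstar := by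
        field_simp
      rw [mul_pow, mul_pow, ha2, hb2, en, em, ← mul_div_assoc, ← mul_div_assoc,
        div_le_div_iff₀ hpos hn]
      have hid : (N - 2 * nstar) ^ 2 * (σ ^ 2 * n + s ^ 2) * nstar -
          (N - 2 * n) ^ 2 * (σ ^ 2 * nstar + s ^ 2) * n =
          4 * (σ ^ 2 * nstar + s ^ 2) * (n - nstar) ^ 2 * (N - 2 * nstar - n) := by
        linear_combination (n - nstar) * (N - 2 * nstar) * hkey
      have hrhs : 0 ≤ 4 * (σ ^ 2 * nstar + s ^ 2) * (n - nstar) ^ 2 * (N - 2 * nstar - n) := by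
        apply mul_nonneg
        · apply mul_nonneg (by positivity) (sq_nonneg _)
        · linarith
      linarith [hid, hrhs]
    calc (N - 2 * n) * b = Real.sqrt (((N - 2 * n) * b) ^ 2) := by rw [Real.sqrt_sq h1]
      _ ≤ Real.sqrt (((N - 2 * nstar) * a) ^ 2) := Real.sqrt_le_sqrt hsqle
      _ = (N - 2 * nstar) * a := Real.sqrt_sq h2
  have hfin : (N - 2 * n) * σ ^ 2 / (Real.sqrt Real.pi * a) ≤
      (N - 2 * nstar) * σ ^ 2 / (Real.sqrt Real.pi * b) := by
    rw [div_le_div_iff₀ (by positivity) (by positivity)]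
    nlinarith [mul_le_mul_of_nonneg_left hmain
      (by positivity : (0:ℝ) ≤ Real.sqrt Real.pi * σ ^ 2)]
  linarith [hfin]
end

section
/- Let N > 0, s > 0, σ > 0 and μ be real numbers, and define Π(n) = N·μ + (N − 2n)·σ²/(√π·√(σ² + s²/n)). Then for every n > 0, Π is differentiable at n with derivative Π'(n) = σ²·√(σ² + s²/n)·(N·s² − 4n²·σ² − 6n·s²)/(2·√π·(n·σ² + s²)²). In particular the critical points of Π on (0, ∞) are exactly the positive roots of 4n²·σ² + 6n·s² − N·s² = 0. -/
open Real

theorem profit_derivative (N s σ μ : ℝ)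
    (hN : 0 < N) (hs : 0 < s) (hσ : 0 < σ)
    (Profit : ℝ → ℝ)
    (hProfit : ∀ n, Profit n = N * μ + (N - 2 * n) * σ ^ 2 /
      (Real.sqrt Real.pi * Real.sqrt (σ ^ 2 + s ^ 2 / n))) :
    ∀ n, 0 < n →
      HasDerivAt Profit
        (σ ^ 2 * Real.sqrt (σ ^ 2 + s ^ 2 / n) * (N * s ^ 2 - 4 * n ^ 2 * σ ^ 2 - 6 * n * s ^ 2) /
          (2 * Real.sqrt Real.pi * (n * σ ^ 2 + s ^ 2) ^ 2)) n ∧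
      (σ ^ 2 * Real.sqrt (σ ^ 2 + s ^ 2 / n) * (N * s ^ 2 - 4 * n ^ 2 * σ ^ 2 - 6 * n * s ^ 2) /
          (2 * Real.sqrt Real.pi * (n * σ ^ 2 + s ^ 2) ^ 2) = 0 ↔
        4 * n ^ 2 * σ ^ 2 + 6 * n * s ^ 2 - N * s ^ 2 = 0) := by
  intro n hn
  have hg : (0:ℝ) < σ ^ 2 + s ^ 2 / n := by positivity
  have hsg : (0:ℝ) < Real.sqrt (σ ^ 2 + s ^ 2 / n) := Real.sqrt_pos.mpr hg
  have hsp : (0:ℝ) < Real.sqrt Real.pi := Real.sqrt_pos.mpr Real.pi_pos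
  have hden : (0:ℝ) < n * σ ^ 2 + s ^ 2 := by positivity
  have hsg2 : Real.sqrt (σ ^ 2 + s ^ 2 / n) ^ 2 = σ ^ 2 + s ^ 2 / n :=
    Real.sq_sqrt hg.le
  constructor
  · -- derivative of inner g
    have h1 : HasDerivAt (fun x : ℝ => σ ^ 2 + s ^ 2 / x) (-(s ^ 2) / n ^ 2) n := by
      have := ((hasDerivAt_inv hn.ne').const_mul (s ^ 2)).const_add (σ ^ 2)
      refine this.congr_deriv ?_
      ring
    have h2 : HasDerivAt (fun x : ℝ => Real.sqrt (σ ^ 2 + s ^ 2 / x))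
        (-(s ^ 2) / n ^ 2 / (2 * Real.sqrt (σ ^ 2 + s ^ 2 / n))) n :=
      h1.sqrt hg.ne'
    have h3 : HasDerivAt (fun x : ℝ => Real.sqrt Real.pi * Real.sqrt (σ ^ 2 + s ^ 2 / x))
        (Real.sqrt Real.pi * (-(s ^ 2) / n ^ 2 / (2 * Real.sqrt (σ ^ 2 + s ^ 2 / n)))) n :=
      h2.const_mul _
    have h4 : HasDerivAt (fun x : ℝ => (N - 2 * x) * σ ^ 2) (-2 * σ ^ 2) n := by
      have := ((hasDerivAt_id n).const_mul 2).const_sub N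
      have h' := this.mul_const (σ ^ 2)
      exact h'.congr_deriv (by ring)
    have hdenne : Real.sqrt Real.pi * Real.sqrt (σ ^ 2 + s ^ 2 / n) ≠ 0 := by positivity
    have h5 := (h4.div h3 hdenne).const_add (N * μ)
    have heq : Profit = fun x => N * μ + (N - 2 * x) * σ ^ 2 /
        (Real.sqrt Real.pi * Real.sqrt (σ ^ 2 + s ^ 2 / x)) := funext hProfit
    rw [heq]
    refine h5.congr_deriv ?_
    set A := Real.sqrt (σ ^ 2 + s ^ 2 / n) with hA
    set B := Real.sqrt Real.pi with hB
    have hA2' : n * A ^ 2 = n * σ ^ 2 + s ^ 2 := by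
      rw [hA, hsg2]; field_simp
    have hrw : n * σ ^ 2 + s ^ 2 = n * A ^ 2 := hA2'.symm
    have hK : N * s ^ 2 - 4 * n ^ 2 * σ ^ 2 - 6 * n * s ^ 2
        = N * s ^ 2 - 2 * n * s ^ 2 - 4 * n ^ 2 * A ^ 2 := by
      linear_combination (4 : ℝ) * n * hA2'
    rw [hrw, hK]
    have hAne : A ≠ 0 := hsg.ne'
    have hBne : B ≠ 0 := hsp.ne'
    field_simp
    ring
  · rw [div_eq_zero_iff]
    constructor
    · rintro (h | h)
      · rcases mul_eq_zero.mp h with h' | h'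
        · rcases mul_eq_zero.mp h' with h'' | h''
          · exact absurd h'' (by positivity)
          · exact absurd h'' hsg.ne'
        · linarith
      · exact absurd h (by positivity)
    · intro h
      left
      have : N * s ^ 2 - 4 * n ^ 2 * σ ^ 2 - 6 * n * s ^ 2 = 0 := by linarith
      rw [this, mul_zero]
end

section
/- Let μ be a real number and σ > 0. Then the iterated integral of max(m₁, m₂), where m₁ and m₂ are each integrated against gaussianReal μ σ², equals μ + σ/√π. -/
open MeasureTheory Real ProbabilityTheory

open Set Filter in
private lemma aux_L1 {b : ℝ} (hb : 0 < b) :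
    ∫ u in Ioi (0:ℝ), u * rexp (-b * u ^ 2) = (2*b)⁻¹ := by
  have A : ∀ x : ℝ, HasDerivAt (fun x => -(2*b)⁻¹ * rexp (-b * x ^ 2))
      (x * rexp (-b * x ^ 2)) x := by
    intro x
    convert ((hasDerivAt_pow 2 x).const_mul (-b)).exp.const_mul (-(2*b)⁻¹) using 1
    have hb' : b ≠ 0 := hb.ne'
    · rfl
    · rfl
    field_simp
    ring
  have B : Tendsto (fun y : ℝ => -(2*b)⁻¹ * rexp (-b * y ^ 2)) atTop (nhds (-(2*b)⁻¹ * 0)) := by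
    refine Tendsto.const_mul _ ?_
    exact tendsto_exp_atBot.comp
      ((tendsto_pow_atTop two_ne_zero).const_mul_atTop_of_neg (neg_lt_zero.2 hb))
  have := integral_Ioi_of_hasDerivAt_of_tendsto' (a := 0) (fun x _ => A x)
    ((integrable_mul_exp_neg_mul_sq hb).integrableOn) B
  simpa using this

private lemma aux_L2 {b : ℝ} (hb : 0 < b) : ∫ u : ℝ, |u| * rexp (-b * u ^ 2) = b⁻¹ := by
  have h : ∀ u : ℝ, |u| * rexp (-b * u ^ 2) = |u| * rexp (-b * |u| ^ 2) := by
    intro u; rw [sq_abs]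
  rw [funext h, integral_comp_abs (f := fun x => x * rexp (-b * x ^ 2)), aux_L1 hb]
  field_simp

private lemma aux_L3 {b : ℝ} : ∫ x : ℝ, x * rexp (-b * x ^ 2) = 0 := by
  have h := integral_neg_eq_self (fun x : ℝ => x * rexp (-b * x ^ 2)) volume
  simp only [neg_sq, neg_mul] at h
  rw [integral_neg] at h
  simp only [neg_mul] at h ⊢
  linarith

private lemma aux_L4 {b : ℝ} (hb : 0 < b) :
    Integrable (fun x : ℝ => |x| * rexp (-b * x ^ 2)) := by
  have h := (integrable_mul_exp_neg_mul_sq hb).abs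
  refine h.congr ?_
  filter_upwards with x
  rw [abs_mul, abs_of_nonneg (exp_pos _).le]

private lemma aux_density (μ : ℝ) {v : NNReal} (hv : v ≠ 0) (f : ℝ → ℝ) :
    ∫ m, f m ∂(gaussianReal μ v) = ∫ x, gaussianPDFReal μ v x * f x := by
  rw [gaussianReal_of_var_ne_zero μ hv]
  have h : gaussianPDF μ v = fun x => ((gaussianPDFReal μ v x).toNNReal : ENNReal) := rfl
  rw [h, integral_withDensity_eq_integral_smul (measurable_gaussianPDFReal μ v).real_toNNReal f]
  congr 1
  ext x
  rw [NNReal.smul_def, smul_eq_mul, Real.coe_toNNReal _ (gaussianPDFReal_nonneg μ v x)]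

private lemma aux_max_eq (a b : ℝ) : max a b = (a + b + |a - b|)/2 := by
  rcases le_total a b with h | h
  · rw [max_eq_right h, abs_of_nonpos (by linarith)]; ring
  · rw [max_eq_left h, abs_of_nonneg (by linarith)]; ring

private lemma aux_abs_max (x y : ℝ) : |max x y| ≤ |x| + |y| := by
  rcases le_total x y with h | h
  · rw [max_eq_right h]; have := abs_nonneg x; linarith
  · rw [max_eq_left h]; have := abs_nonneg y; linarith

theorem expected_max_two_iid_gaussians (μ σ : ℝ) (hσ : 0 < σ) :
    (∫ m₁, (∫ m₂, max m₁ m₂ ∂(gaussianReal μ ((σ ^ 2).toNNReal)))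
        ∂(gaussianReal μ ((σ ^ 2).toNNReal))) =
      μ + σ / Real.sqrt Real.pi := by
  have hσ2 : (0:ℝ) < σ^2 := by positivity
  set v : NNReal := (σ^2).toNNReal with hv_def
  have hv : v ≠ 0 := by
    simp [hv_def, Real.toNNReal_eq_zero, not_le, hσ2, hσ.ne']
  have hvR : (v : ℝ) = σ^2 := Real.coe_toNNReal _ hσ2.le
  set b : ℝ := (2*σ^2)⁻¹ with hb_def
  have hb : 0 < b := by positivity
  have hb2 : 0 < b/2 := by positivity
  set c : ℝ := (Real.sqrt (2*π*σ^2))⁻¹ with hc_def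
  set q : ℝ → ℝ := fun x => c * rexp (-b * x^2) with hq_def
  have hqp : ∀ x, gaussianPDFReal μ v (x + μ) = q x := by
    intro x
    rw [gaussianPDFReal, hq_def]
    simp only [add_sub_cancel_right, hvR]
    congr 1
    rw [neg_div, hb_def]
    ring_nf
  -- the key reduction to Lebesgue integrals
  have key : ∀ f : ℝ → ℝ, ∫ m, f m ∂(gaussianReal μ v) = ∫ x, q x * f (x + μ) := by
    intro f
    rw [aux_density μ hv f,
      ← integral_add_right_eq_self (fun x => gaussianPDFReal μ v x * f x) μ]
    simp only [hqp]
  -- integrability facts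
  have hq_cont : Continuous q := by
    apply Continuous.mul continuous_const
    exact Real.continuous_exp.comp (by continuity)
  have hq_nonneg : ∀ x, 0 ≤ q x := fun x => by
    rw [hq_def]; positivity
  have hq_int : Integrable q := (integrable_exp_neg_mul_sq hb).const_mul c
  have hxq_int : Integrable (fun x => x * q x) := by
    have h := ((integrable_mul_exp_neg_mul_sq hb).const_mul c)
    refine h.congr ?_
    filter_upwards with x
    rw [hq_def]; ring
  have habsq_int : Integrable (fun x => |x| * q x) := by
    have h := ((aux_L4 hb).const_mul c)
    refine h.congr ?_
    filter_upwards with x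
    rw [hq_def]; ring
  have hq1 : ∫ x, q x = 1 := by
    rw [hq_def]
    rw [integral_const_mul, integral_gaussian]
    have h : π / b = 2*π*σ^2 := by rw [hb_def]; field_simp
    rw [h, hc_def, inv_mul_cancel₀]
    positivity
  have hqm : ∫ x, x * q x = 0 := by
    have h : ∀ x : ℝ, x * q x = c * (x * rexp (-b * x^2)) := by intro x; rw [hq_def]; ring
    rw [funext h, integral_const_mul, aux_L3, mul_zero]
  -- product integrability
  have habs1 : Integrable (fun z : ℝ×ℝ => (|z.1| * q z.1) * q z.2) (volume.prod volume) :=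
    habsq_int.mul_prod hq_int
  have habs2 : Integrable (fun z : ℝ×ℝ => q z.1 * (|z.2| * q z.2)) (volume.prod volume) :=
    hq_int.mul_prod habsq_int
  have hqq : Integrable (fun z : ℝ×ℝ => q z.1 * q z.2) (volume.prod volume) :=
    hq_int.mul_prod hq_int
  have h1int : Integrable (fun z : ℝ×ℝ => (z.1 * q z.1) * q z.2) (volume.prod volume) :=
    hxq_int.mul_prod hq_int
  have h2int : Integrable (fun z : ℝ×ℝ => q z.1 * (z.2 * q z.2)) (volume.prod volume) :=
    hq_int.mul_prod hxq_int
  have hJint : Integrable (fun z : ℝ×ℝ => q z.1 * q z.2 * |z.1 - z.2|) (volume.prod volume) := by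
    refine Integrable.mono' (habs1.add habs2) ?_ ?_
    · exact (((hq_cont.comp continuous_fst).mul (hq_cont.comp continuous_snd)).mul
        ((continuous_fst.sub continuous_snd).abs)).aestronglyMeasurable
    · filter_upwards with z
      have h1 := abs_sub z.1 z.2
      have h2 := hq_nonneg z.1
      have h3 := hq_nonneg z.2
      simp only [Pi.add_apply]
      rw [Real.norm_eq_abs, abs_of_nonneg (by positivity)]
      calc q z.1 * q z.2 * |z.1 - z.2| ≤ q z.1 * q z.2 * (|z.1| + |z.2|) :=
            mul_le_mul_of_nonneg_left h1 (mul_nonneg h2 h3)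
        _ = |z.1| * q z.1 * q z.2 + q z.1 * (|z.2| * q z.2) := by ring
  have hFint : Integrable (fun z : ℝ×ℝ => q z.1 * (q z.2 * (max z.1 z.2 + μ)))
      (volume.prod volume) := by
    refine Integrable.mono' ((habs1.add habs2).add ((hqq.const_mul |μ|))) ?_ ?_
    · exact ((hq_cont.comp continuous_fst).mul ((hq_cont.comp continuous_snd).mul
        (((continuous_fst.max continuous_snd).add continuous_const)))).aestronglyMeasurable
    · filter_upwards with z
      have h1 := aux_abs_max z.1 z.2
      have h2 := hq_nonneg z.1
      have h3 := hq_nonneg z.2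
      have h6 : |max z.1 z.2 + μ| ≤ |z.1| + |z.2| + |μ| :=
        le_trans (abs_add_le _ _) (by linarith)
      simp only [Pi.add_apply]
      rw [Real.norm_eq_abs, abs_mul (q z.1), abs_mul (q z.2),
        abs_of_nonneg h2, abs_of_nonneg h3]
      calc q z.1 * (q z.2 * |max z.1 z.2 + μ|)
          ≤ q z.1 * (q z.2 * (|z.1| + |z.2| + |μ|)) :=
            mul_le_mul_of_nonneg_left (mul_le_mul_of_nonneg_left h6 h3) h2
        _ = |z.1| * q z.1 * q z.2 + q z.1 * (|z.2| * q z.2) + |μ| * (q z.1 * q z.2) := by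
            ring
  -- reduce the iterated gaussian integral to a product Lebesgue integral
  have step1 : (∫ m₁, (∫ m₂, max m₁ m₂ ∂(gaussianReal μ v)) ∂(gaussianReal μ v))
      = ∫ z : ℝ×ℝ, q z.1 * (q z.2 * (max z.1 z.2 + μ)) ∂(volume.prod volume) := by
    rw [key (fun m₁ => ∫ m₂, max m₁ m₂ ∂(gaussianReal μ v))]
    have h1 : ∀ x : ℝ, (∫ m₂, max (x+μ) m₂ ∂(gaussianReal μ v))
        = ∫ y, q y * (max x y + μ) := by
      intro x
      rw [key (fun m₂ => max (x+μ) m₂)]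
      congr 1
      ext y
      rw [max_add_add_right]
    calc ∫ x, q x * (∫ m₂, max (x+μ) m₂ ∂(gaussianReal μ v))
        = ∫ x, ∫ y, q x * (q y * (max x y + μ)) := by
          congr 1; ext x
          rw [h1 x, integral_const_mul]
      _ = ∫ z : ℝ×ℝ, q z.1 * (q z.2 * (max z.1 z.2 + μ)) ∂(volume.prod volume) :=
          integral_integral hFint
  -- split the product integral
  have hsplit : ∀ z : ℝ×ℝ, q z.1 * (q z.2 * (max z.1 z.2 + μ))
      = (1/2) * ((z.1 * q z.1) * q z.2) + ((1/2) * (q z.1 * (z.2 * q z.2))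
        + ((1/2) * (q z.1 * q z.2 * |z.1 - z.2|) + μ * (q z.1 * q z.2))) := by
    intro z
    rw [aux_max_eq]
    ring
  have step2 : (∫ z : ℝ×ℝ, q z.1 * (q z.2 * (max z.1 z.2 + μ)) ∂(volume.prod volume))
      = (1/2) * (∫ z : ℝ×ℝ, q z.1 * q z.2 * |z.1 - z.2| ∂(volume.prod volume)) + μ := by
    rw [funext hsplit]
    have i3 : Integrable (fun z : ℝ×ℝ => (1/2) * (q z.1 * q z.2 * |z.1 - z.2|)
        + μ * (q z.1 * q z.2)) (volume.prod volume) :=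
      (hJint.const_mul _).add (hqq.const_mul _)
    have i2 : Integrable (fun z : ℝ×ℝ => (1/2) * (q z.1 * (z.2 * q z.2))
        + ((1/2) * (q z.1 * q z.2 * |z.1 - z.2|) + μ * (q z.1 * q z.2)))
        (volume.prod volume) := (h2int.const_mul _).add i3
    rw [integral_add (h1int.const_mul _) i2]
    rw [integral_add (h2int.const_mul _) i3]
    rw [integral_add (hJint.const_mul _) (hqq.const_mul _)]
    rw [integral_const_mul, integral_const_mul, integral_const_mul, integral_const_mul]
    rw [integral_prod_mul (fun x => x * q x) q, integral_prod_mul q (fun x => x * q x),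
      integral_prod_mul q q]
    rw [hqm, hq1]
    ring
  -- change of variables in the |x - y| integral
  set S : ℝ×ℝ → ℝ×ℝ := fun z => (z.1, z.1 - z.2) with hS_def
  have hSmeas : Measurable S := measurable_fst.prodMk (measurable_fst.sub measurable_snd)
  have hSinv : ∀ z, S (S z) = z := by
    intro z; simp [hS_def, sub_sub_cancel]
  have hSemb : MeasurableEmbedding S :=
    (MeasurableEquiv.mk ⟨S, S, hSinv, hSinv⟩ hSmeas hSmeas).measurableEmbedding
  have hSpres : MeasurePreserving S (volume.prod volume) (volume.prod volume) := by
    have h1 : MeasurePreserving (fun z : ℝ×ℝ => (z.1, z.2 - z.1))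
        (volume.prod volume) (volume.prod volume) := measurePreserving_prod_sub volume volume
    have h2 : MeasurePreserving (Prod.map (id : ℝ → ℝ) (Neg.neg : ℝ → ℝ))
        (volume.prod volume) (volume.prod volume) :=
      (MeasurePreserving.id volume).prod (Measure.measurePreserving_neg volume)
    have h3 : S = (Prod.map (id : ℝ → ℝ) (Neg.neg : ℝ → ℝ)) ∘ (fun z : ℝ×ℝ => (z.1, z.2 - z.1)) := by
      ext z
      · rfl
      · simp [hS_def, neg_sub]
    rw [h3]
    exact h2.comp h1
  have hGeq : (fun z : ℝ×ℝ => q z.1 * q z.2 * |z.1 - z.2|) ∘ S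
      = fun z : ℝ×ℝ => q z.1 * q (z.1 - z.2) * |z.2| := by
    ext z
    simp only [Function.comp_apply, hS_def, sub_sub_cancel]
  have hGint : Integrable (fun z : ℝ×ℝ => q z.1 * q (z.1 - z.2) * |z.2|) (volume.prod volume) := by
    rw [← hGeq]
    exact (hSpres.integrable_comp_emb hSemb).2 hJint
  have step3 : (∫ z : ℝ×ℝ, q z.1 * q z.2 * |z.1 - z.2| ∂(volume.prod volume))
      = ∫ y : ℝ, (∫ x : ℝ, q x * q (x - y)) * |y| := by
    rw [← hSpres.integral_comp hSemb (fun z => q z.1 * q z.2 * |z.1 - z.2|)]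
    have : (fun z : ℝ×ℝ => q (S z).1 * q (S z).2 * |(S z).1 - (S z).2|)
        = fun z : ℝ×ℝ => q z.1 * q (z.1 - z.2) * |z.2| := hGeq
    rw [show (∫ z : ℝ×ℝ, q (S z).1 * q (S z).2 * |(S z).1 - (S z).2| ∂(volume.prod volume))
        = ∫ z : ℝ×ℝ, q z.1 * q (z.1 - z.2) * |z.2| ∂(volume.prod volume) from by rw [this]]
    rw [integral_prod_symm _ hGint]
    congr 1
    ext y
    rw [← integral_mul_const]
  -- the convolution integral
  have hconv : ∀ y : ℝ, (∫ x : ℝ, q x * q (x - y)) = c^2 * Real.sqrt (π/(2*b)) * rexp (-(b/2) * y^2) := by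
    intro y
    have hpt : ∀ x : ℝ, q x * q (x - y)
        = (c^2 * rexp (-(b/2) * y^2)) * rexp (-(2*b) * (x - y/2)^2) := by
      intro x
      have harg : (-b*x^2) + (-b*(x-y)^2) = (-(b/2)*y^2) + (-(2*b)*(x-y/2)^2) := by ring
      calc q x * q (x - y) = c^2 * rexp ((-b*x^2) + (-b*(x-y)^2)) := by
            rw [hq_def, Real.exp_add]; ring
        _ = c^2 * rexp ((-(b/2)*y^2) + (-(2*b)*(x-y/2)^2)) := by rw [harg]
        _ = (c^2 * rexp (-(b/2)*y^2)) * rexp (-(2*b)*(x-y/2)^2) := by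
            rw [Real.exp_add]; ring
    rw [funext hpt, integral_const_mul]
    rw [integral_sub_right_eq_self (fun x => rexp (-(2*b) * x^2)) (y/2)]
    rw [integral_gaussian]
    ring
  have step4 : (∫ y : ℝ, (∫ x : ℝ, q x * q (x - y)) * |y|)
      = c^2 * Real.sqrt (π/(2*b)) * (b/2)⁻¹ := by
    have h : ∀ y : ℝ, (∫ x : ℝ, q x * q (x - y)) * |y|
        = (c^2 * Real.sqrt (π/(2*b))) * (|y| * rexp (-(b/2) * y^2)) := by
      intro y; rw [hconv y]; ring
    rw [funext h, integral_const_mul, aux_L2 hb2]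
  -- put everything together
  rw [step1, step2, step3, step4]
  -- final arithmetic
  have hπ : (0:ℝ) < Real.sqrt π := Real.sqrt_pos.2 pi_pos
  have hc2 : c^2 = (2*π*σ^2)⁻¹ := by
    rw [hc_def, ← Real.sqrt_inv, Real.sq_sqrt (by positivity)]
  have hπb : π/(2*b) = π*σ^2 := by rw [hb_def]; field_simp
  have hsq : Real.sqrt (π*σ^2) = Real.sqrt π * σ := by
    rw [Real.sqrt_mul pi_nonneg, Real.sqrt_sq hσ.le]
  have hbinv : (b/2)⁻¹ = 4*σ^2 := by rw [hb_def]; field_simp; ring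
  rw [hc2, hπb, hsq, hbinv]
  have hπeq : π = Real.sqrt π * Real.sqrt π := (Real.mul_self_sqrt pi_nonneg).symm
  have hπne : Real.sqrt π ≠ 0 := ne_of_gt hπ
  field_simp
  linear_combination (-(4 * σ)) * hπeq
end

section
/- Let N > 0, s > 0, σ > 0, μ be real, z > 0 and d > 0, and let n_HT = 2·z²·s²/d² be the sample size recommended by a classical hypothesis test. Let Reg(n) = N·(μ + σ/√π) − (N·μ + (N − 2n)·σ²/(√π·√(σ² + s²/n))). Then Reg(n_HT) > N·(σ/√π)·d²/(4·z²·σ² + 2·d²). In particular the regret from using the hypothesis-test sample size grows at least linearly in N. -/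
open Real

theorem regret_hypothesis_test_lower_bound (N s σ μ z d : ℝ)
    (hN : 0 < N) (hs : 0 < s) (hσ : 0 < σ) (hz : 0 < z) (hd : 0 < d)
    (nHT : ℝ) (hnHT : nHT = 2 * z ^ 2 * s ^ 2 / d ^ 2)
    (Reg : ℝ → ℝ)
    (hReg : ∀ n, Reg n = N * (μ + σ / Real.sqrt Real.pi) -
      (N * μ + (N - 2 * n) * σ ^ 2 /
        (Real.sqrt Real.pi * Real.sqrt (σ ^ 2 + s ^ 2 / n)))) :
    Reg nHT > N * (σ / Real.sqrt Real.pi) * d ^ 2 / (4 * z ^ 2 * σ ^ 2 + 2 * d ^ 2) := by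
  have hn : 0 < nHT := by rw [hnHT]; positivity
  have hsq : s ^ 2 / nHT = d ^ 2 / (2 * z ^ 2) := by
    rw [hnHT]; field_simp
  rw [hReg, hsq]
  set P := Real.sqrt Real.pi with hP
  have hPpos : 0 < P := Real.sqrt_pos.mpr Real.pi_pos
  set Q := Real.sqrt (σ ^ 2 + d ^ 2 / (2 * z ^ 2)) with hQ
  have hQ2 : Q ^ 2 = σ ^ 2 + d ^ 2 / (2 * z ^ 2) := Real.sq_sqrt (by positivity)
  have hQpos : 0 < Q := Real.sqrt_pos.mpr (by positivity)
  have hQσ : σ < Q := by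
    rw [hQ, show σ = Real.sqrt (σ ^ 2) by rw [Real.sqrt_sq hσ.le]]
    apply Real.sqrt_lt_sqrt (by positivity)
    have : 0 < d ^ 2 / (2 * z ^ 2) := by positivity
    nlinarith [Real.sq_sqrt (sq_nonneg σ)]
  have hd2 : d ^ 2 = 2 * z ^ 2 * (Q ^ 2 - σ ^ 2) := by
    have : (2 : ℝ) * z ^ 2 ≠ 0 := by positivity
    field_simp at hQ2 ⊢
    linarith [hQ2]
  rw [gt_iff_lt]
  have hden : 0 < 4 * z ^ 2 * σ ^ 2 + 2 * d ^ 2 := by positivity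
  rw [div_lt_iff₀ hden]
  -- goal: N * (σ / P) * d ^ 2 < (...) * (4z²σ² + 2d²)
  have key : N * (Q ^ 2 + σ ^ 2) > 2 * Q * σ * (N - 2 * nHT) := by
    nlinarith [sq_nonneg (Q - σ), mul_pos hQpos hn, mul_pos hσ hn]
  have hPQ : 0 < P * Q := mul_pos hPpos hQpos
  rw [hd2]
  have expand : N * (μ + σ / P) - (N * μ + (N - 2 * nHT) * σ ^ 2 / (P * Q))
      = (N * σ * Q - (N - 2 * nHT) * σ ^ 2) / (P * Q) := by
    field_simp
    ring
  rw [expand, div_mul_eq_mul_div, lt_div_iff₀ hPQ]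
  have hz2 : 0 < z ^ 2 := by positivity
  have hL : N * (σ / P) * (2 * z ^ 2 * (Q ^ 2 - σ ^ 2)) * (P * Q)
      = N * σ * (2 * z ^ 2 * (Q ^ 2 - σ ^ 2)) * Q := by
    field_simp
  rw [hL]
  nlinarith [mul_pos (mul_pos (mul_pos hz2 hQpos) hσ) (sub_pos.mpr key)]
end

section
/- Let N ≥ 2, s > 0, σ > 0, μ be real, z > 0 and d > 0, and let n_FPC = 2·z²·s²·N/((N − 1)·d² + 4·s²·z²) be the hypothesis-test sample size with finite population correction. Let Reg(n) = N·(μ + σ/√π) − (N·μ + (N − 2n)·σ²/(√π·√(σ² + s²/n))). Then Reg(n_FPC) > N·(σ/√π)·d²/(2·(4·z²·σ² + d²)). In particular the regret from using the finite-population-corrected hypothesis-test sample size grows at least linearly in N. -/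
open Real

set_option maxHeartbeats 800000 in
theorem regret_fpc_hypothesis_test_lower_bound (N s σ μ z d : ℝ)
    (hN : 2 ≤ N) (hs : 0 < s) (hσ : 0 < σ) (hz : 0 < z) (hd : 0 < d)
    (nFPC : ℝ)
    (hnFPC : nFPC = 2 * z ^ 2 * s ^ 2 * N / ((N - 1) * d ^ 2 + 4 * s ^ 2 * z ^ 2))
    (Reg : ℝ → ℝ)
    (hReg : ∀ n, Reg n = N * (μ + σ / Real.sqrt Real.pi) -
      (N * μ + (N - 2 * n) * σ ^ 2 /
        (Real.sqrt Real.pi * Real.sqrt (σ ^ 2 + s ^ 2 / n)))) :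
    Reg nFPC > N * (σ / Real.sqrt Real.pi) * d ^ 2 / (2 * (4 * z ^ 2 * σ ^ 2 + d ^ 2)) := by
  have hP : 0 < Real.sqrt Real.pi := Real.sqrt_pos.mpr Real.pi_pos
  set P := Real.sqrt Real.pi with hPdef
  have hD : 0 < (N - 1) * d ^ 2 + 4 * s ^ 2 * z ^ 2 := by nlinarith
  have hzs : 0 < z ^ 2 * s ^ 2 := by positivity
  have hn : 0 < nFPC := by
    rw [hnFPC]; exact div_pos (by nlinarith) hD
  have hE : 0 < 2 * (4 * z ^ 2 * σ ^ 2 + d ^ 2) := by positivity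
  -- s^2 / nFPC ≥ d^2 / (4 z^2)
  have hsn : d ^ 2 / (4 * z ^ 2) ≤ s ^ 2 / nFPC := by
    rw [div_le_div_iff₀ (by positivity) hn, hnFPC, show
      d ^ 2 * (2 * z ^ 2 * s ^ 2 * N / ((N - 1) * d ^ 2 + 4 * s ^ 2 * z ^ 2)) =
      d ^ 2 * (2 * z ^ 2 * s ^ 2 * N) / ((N - 1) * d ^ 2 + 4 * s ^ 2 * z ^ 2) from
      (mul_div_assoc _ _ _).symm, div_le_iff₀ hD]
    nlinarith [mul_nonneg (mul_nonneg (sub_nonneg.mpr hN)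
      (mul_pos (pow_pos hs 2) (pow_pos hz 2)).le) (pow_pos hd 2).le,
      mul_pos (mul_pos (pow_pos hs 2) (pow_pos hz 2))
        (mul_pos (pow_pos hs 2) (pow_pos hz 2))]
  -- t = sqrt(1 + c)
  set c : ℝ := d ^ 2 / (4 * z ^ 2 * σ ^ 2) with hc
  have hcpos : 0 < c := by positivity
  set t : ℝ := Real.sqrt (1 + c) with ht
  have ht2 : t ^ 2 = 1 + c := Real.sq_sqrt (by positivity)
  have htpos : 0 < t := Real.sqrt_pos.mpr (by positivity)
  have ht1 : 1 < t := by nlinarith [ht2, htpos]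
  set S : ℝ := Real.sqrt (σ ^ 2 + s ^ 2 / nFPC) with hS
  have hSge : σ * t ≤ S := by
    have h2 : σ ^ 2 * c = d ^ 2 / (4 * z ^ 2) := by
      rw [hc]; field_simp
    have h1 : σ ^ 2 * (1 + c) ≤ σ ^ 2 + s ^ 2 / nFPC := by nlinarith
    calc σ * t = Real.sqrt (σ ^ 2 * (1 + c)) := by
          rw [Real.sqrt_mul (by positivity), Real.sqrt_sq hσ.le]
      _ ≤ S := Real.sqrt_le_sqrt h1
  have hS0 : 0 < S := lt_of_lt_of_le (by positivity) hSge
  -- core inequality without the 1/P factor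
  have core : N * σ * d ^ 2 / (2 * (4 * z ^ 2 * σ ^ 2 + d ^ 2)) <
      N * σ - (N - 2 * nFPC) * σ ^ 2 / S := by
    have hNσ : 0 < N * σ := by nlinarith
    have hlt1 : N * σ * d ^ 2 / (2 * (4 * z ^ 2 * σ ^ 2 + d ^ 2)) < N * σ := by
      rw [div_lt_iff₀ hE]
      nlinarith [mul_pos hNσ (mul_pos (pow_pos hz 2) (pow_pos hσ 2)),
        mul_pos hNσ (pow_pos hd 2)]
    rcases le_or_gt (N - 2 * nFPC) 0 with hcase | hcase
    · have : (N - 2 * nFPC) * σ ^ 2 / S ≤ 0 :=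
        div_nonpos_of_nonpos_of_nonneg (by nlinarith) hS0.le
      linarith
    · have hσt : 0 < σ * t := by positivity
      -- (N - 2n) σ² / S < N σ / t
      have h1 : (N - 2 * nFPC) * σ ^ 2 / S < N * σ / t := by
        have hnum : 0 ≤ (N - 2 * nFPC) * σ ^ 2 :=
          mul_nonneg hcase.le (sq_nonneg σ)
        have ha : (N - 2 * nFPC) * σ ^ 2 / S ≤ (N - 2 * nFPC) * σ ^ 2 / (σ * t) :=
          div_le_div_of_nonneg_left hnum hσt hSge
        have hb : (N - 2 * nFPC) * σ ^ 2 / (σ * t) < N * σ ^ 2 / (σ * t) :=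
          div_lt_div_of_pos_right (by nlinarith [pow_pos hσ 2, hn]) hσt
        have heq : N * σ ^ 2 / (σ * t) = N * σ / t := by
          rw [div_eq_div_iff (by positivity) htpos.ne']; ring
        rw [heq] at hb
        linarith
      -- N σ d² / (2E) ≤ N σ - N σ / t
      have h2 : N * σ * d ^ 2 / (2 * (4 * z ^ 2 * σ ^ 2 + d ^ 2)) ≤ N * σ - N * σ / t := by
        have ht2' : t ^ 2 * (4 * z ^ 2 * σ ^ 2) = 4 * z ^ 2 * σ ^ 2 + d ^ 2 := by
          rw [ht2, hc]; field_simp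
        have e1 : d ^ 2 / (2 * (4 * z ^ 2 * σ ^ 2 + d ^ 2)) = (t ^ 2 - 1) / (2 * t ^ 2) := by
          rw [div_eq_div_iff hE.ne' (by positivity)]
          linear_combination (-2 : ℝ) * ht2'
        have e2 : (1 : ℝ) - 1 / t = (t - 1) / t := by
          field_simp
        have hkey : d ^ 2 / (2 * (4 * z ^ 2 * σ ^ 2 + d ^ 2)) ≤ 1 - 1 / t := by
          rw [e1, e2, div_le_div_iff₀ (by positivity) htpos]
          nlinarith [mul_nonneg htpos.le (sq_nonneg (t - 1))]
        have hmul : N * σ * (d ^ 2 / (2 * (4 * z ^ 2 * σ ^ 2 + d ^ 2))) ≤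
            N * σ * (1 - 1 / t) := mul_le_mul_of_nonneg_left hkey hNσ.le
        calc N * σ * d ^ 2 / (2 * (4 * z ^ 2 * σ ^ 2 + d ^ 2))
            = N * σ * (d ^ 2 / (2 * (4 * z ^ 2 * σ ^ 2 + d ^ 2))) := by ring
          _ ≤ N * σ * (1 - 1 / t) := hmul
          _ = N * σ - N * σ / t := by ring
      linarith
  -- rewrite the goal as (·)/P form
  rw [hReg]
  have hform : N * (μ + σ / P) - (N * μ + (N - 2 * nFPC) * σ ^ 2 / (P * S))
      = (N * σ - (N - 2 * nFPC) * σ ^ 2 / S) / P := by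
    field_simp
    ring
  have htarget : N * (σ / P) * d ^ 2 / (2 * (4 * z ^ 2 * σ ^ 2 + d ^ 2))
      = (N * σ * d ^ 2 / (2 * (4 * z ^ 2 * σ ^ 2 + d ^ 2))) / P := by
    field_simp
  rw [hform, htarget]
  exact div_lt_div_of_pos_right core hP
end

section
/- Let N > 0, s > 0 and μ > 0. For σ > 0 define n*(σ) = √(N·s²/(4σ²) + (3s²/(4σ²))²) − 3s²/(4σ²) and the relative regret R(σ) = [N·(μ + σ/√π) − (N·μ + (N − 2·n*(σ))·σ²/(√π·√(σ² + s²/n*(σ))))] / (N·(μ + σ/√π)). Then R(σ) tends to 0 as σ tends to 0 from the right. -/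
open Real Filter

theorem relative_regret_tendsto_zero_at_zero (N s μ : ℝ)
    (hN : 0 < N) (hs : 0 < s) (hμ : 0 < μ)
    (nstar R : ℝ → ℝ)
    (hnstar : ∀ σ, nstar σ = Real.sqrt (N * s ^ 2 / (4 * σ ^ 2) +
      (3 * s ^ 2 / (4 * σ ^ 2)) ^ 2) - 3 * s ^ 2 / (4 * σ ^ 2))
    (hR : ∀ σ, R σ =
      (N * (μ + σ / Real.sqrt Real.pi) -
        (N * μ + (N - 2 * nstar σ) * σ ^ 2 /
          (Real.sqrt Real.pi * Real.sqrt (σ ^ 2 + s ^ 2 / nstar σ)))) /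
        (N * (μ + σ / Real.sqrt Real.pi))) :
    Filter.Tendsto R (nhdsWithin 0 (Set.Ioi 0)) (nhds 0) := by
  have hπ : 0 < Real.sqrt Real.pi := Real.sqrt_pos.2 Real.pi_pos
  set g : ℝ → ℝ := fun σ => N / (Real.sqrt (4 * N * σ ^ 2 / s ^ 2 + 9) + 3) with hgdef
  have hgpos : ∀ σ, 0 < g σ := by
    intro σ
    apply div_pos hN
    positivity
  have harg : ∀ σ : ℝ, (0:ℝ) ≤ 4 * N * σ ^ 2 / s ^ 2 + 9 := by intro σ; positivity
  have hns : ∀ σ ∈ Set.Ioi (0:ℝ), nstar σ = g σ := by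
    intro σ hσ
    have hσ' : (0:ℝ) < σ := hσ
    rw [hnstar]
    have h1 : N * s ^ 2 / (4 * σ ^ 2) + (3 * s ^ 2 / (4 * σ ^ 2)) ^ 2
        = (4 * N * σ ^ 2 / s ^ 2 + 9) * (s ^ 2 / (4 * σ ^ 2)) ^ 2 := by
      field_simp
      ring
    rw [h1, Real.sqrt_mul (harg σ), Real.sqrt_sq (by positivity)]
    have hX : Real.sqrt (4 * N * σ ^ 2 / s ^ 2 + 9) ^ 2 = 4 * N * σ ^ 2 / s ^ 2 + 9 :=
      Real.sq_sqrt (harg σ)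
    have hden : (0:ℝ) < Real.sqrt (4 * N * σ ^ 2 / s ^ 2 + 9) + 3 := by positivity
    rw [hgdef]
    rw [eq_div_iff hden.ne']
    have hk : s ^ 2 / (4 * σ ^ 2) * (4 * N * σ ^ 2 / s ^ 2) = N := by
      field_simp
    linear_combination (s ^ 2 / (4 * σ ^ 2)) * hX + hk
  set F : ℝ → ℝ := fun σ =>
    (N * σ / Real.sqrt Real.pi - (N - 2 * g σ) * σ ^ 2 /
      (Real.sqrt Real.pi * Real.sqrt (σ ^ 2 + s ^ 2 / g σ))) /
      (N * (μ + σ / Real.sqrt Real.pi)) with hFdef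
  have hRF : ∀ σ ∈ Set.Ioi (0:ℝ), R σ = F σ := by
    intro σ hσ
    rw [hR, hns σ hσ, hFdef]
    ring
  have hg0 : g 0 = N / 6 := by
    rw [hgdef]
    norm_num
  have hgc : ContinuousAt g 0 := by
    apply ContinuousAt.div continuousAt_const
    · exact ((Real.continuous_sqrt.continuousAt).comp (by fun_prop)).add continuousAt_const
    · positivity
  have hF0 : F 0 = 0 := by
    simp [hFdef]
  have hFc : ContinuousAt F 0 := by
    apply ContinuousAt.div
    · apply ContinuousAt.sub
      · fun_prop
      · apply ContinuousAt.div
        · exact (continuousAt_const.sub (continuousAt_const.mul hgc)).mul (by fun_prop)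
        · apply ContinuousAt.mul continuousAt_const
          apply Real.continuous_sqrt.continuousAt.comp
          exact (by fun_prop : ContinuousAt (fun σ : ℝ => σ ^ 2) 0).add
            (continuousAt_const.div hgc (hgpos 0).ne')
        · have hpos : (0:ℝ) < (0:ℝ) ^ 2 + s ^ 2 / g 0 := by
            rw [hg0]; positivity
          have hsq : (0:ℝ) < Real.sqrt ((0:ℝ) ^ 2 + s ^ 2 / g 0) := Real.sqrt_pos.2 hpos
          exact (mul_pos hπ hsq).ne'
    · fun_prop
    · have : N * (μ + 0 / Real.sqrt Real.pi) = N * μ := by norm_num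
      rw [this]
      positivity
  have hFt : Filter.Tendsto F (nhdsWithin 0 (Set.Ioi 0)) (nhds 0) := by
    have h := hFc.tendsto.mono_left (nhdsWithin_le_nhds (s := Set.Ioi (0:ℝ)))
    rwa [hF0] at h
  apply hFt.congr'
  filter_upwards [self_mem_nhdsWithin] with σ hσ
  exact (hRF σ hσ).symm
end

section
/- Let N > 0, s > 0 and μ > 0. For σ > 0 define n*(σ) = √(N·s²/(4σ²) + (3s²/(4σ²))²) − 3s²/(4σ²) and the relative regret R(σ) = [N·(μ + σ/√π) − (N·μ + (N − 2·n*(σ))·σ²/(√π·√(σ² + s²/n*(σ))))] / (N·(μ + σ/√π)). Then R(σ) tends to 0 as σ tends to infinity, while R(σ) > 0 for every σ > 0; consequently R attains its maximum at some finite positive value of σ. -/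
open Real Filter

lemma sqrt_add_le'' (x y : ℝ) (hx : 0 ≤ x) (hy : 0 ≤ y) :
    Real.sqrt (x + y) ≤ Real.sqrt x + Real.sqrt y := by
  rw [Real.sqrt_le_left (by positivity)]
  nlinarith [Real.sq_sqrt hx, Real.sq_sqrt hy, Real.sqrt_nonneg x, Real.sqrt_nonneg y]

set_option maxHeartbeats 2000000 in
theorem relative_regret_attains_maximum (N s μ : ℝ)
    (hN : 0 < N) (hs : 0 < s) (hμ : 0 < μ)
    (nstar R : ℝ → ℝ)
    (hnstar : ∀ σ, nstar σ = Real.sqrt (N * s ^ 2 / (4 * σ ^ 2) +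
      (3 * s ^ 2 / (4 * σ ^ 2)) ^ 2) - 3 * s ^ 2 / (4 * σ ^ 2))
    (hR : ∀ σ, R σ =
      (N * (μ + σ / Real.sqrt Real.pi) -
        (N * μ + (N - 2 * nstar σ) * σ ^ 2 /
          (Real.sqrt Real.pi * Real.sqrt (σ ^ 2 + s ^ 2 / nstar σ)))) /
        (N * (μ + σ / Real.sqrt Real.pi))) :
    Filter.Tendsto R Filter.atTop (nhds 0) ∧
    (∀ σ, 0 < σ → 0 < R σ) ∧
    ∃ σ₀, 0 < σ₀ ∧ ∀ σ, 0 < σ → R σ ≤ R σ₀ := by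
  have hπ : (0:ℝ) < Real.sqrt Real.pi := Real.sqrt_pos.mpr Real.pi_pos
  have hsqN : Real.sqrt N * Real.sqrt N = N := Real.mul_self_sqrt hN.le
  have hsNpos : 0 < Real.sqrt N := Real.sqrt_pos.mpr hN
  have hsx : ∀ σ : ℝ, 0 < σ →
      Real.sqrt (N * s ^ 2 / (4 * σ ^ 2)) = Real.sqrt N * s / (2 * σ) := by
    intro σ hσ
    have h : N * s ^ 2 / (4 * σ ^ 2) = (Real.sqrt N * s / (2 * σ)) ^ 2 := by
      field_simp; ring_nf; rw [Real.sq_sqrt hN.le]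
    rw [h, Real.sqrt_sq (by positivity)]
  have hnp : ∀ σ : ℝ, 0 < σ → 0 < nstar σ := by
    intro σ hσ
    rw [hnstar σ]
    have h : (3 * s ^ 2 / (4 * σ ^ 2)) < Real.sqrt (N * s ^ 2 / (4 * σ ^ 2) +
        (3 * s ^ 2 / (4 * σ ^ 2)) ^ 2) := by
      rw [Real.lt_sqrt (by positivity)]
      have : 0 < N * s ^ 2 / (4 * σ ^ 2) := by positivity
      linarith
    linarith
  have hn6 : ∀ σ : ℝ, 0 < σ → nstar σ ≤ N / 6 := by
    intro σ hσ
    rw [hnstar σ]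
    have h : Real.sqrt (N * s ^ 2 / (4 * σ ^ 2) + (3 * s ^ 2 / (4 * σ ^ 2)) ^ 2)
        ≤ N / 6 + 3 * s ^ 2 / (4 * σ ^ 2) := by
      rw [Real.sqrt_le_left (by positivity)]
      have h2 : N * (3 * s ^ 2 / (4 * σ ^ 2)) / 3 = N * s ^ 2 / (4 * σ ^ 2) := by ring
      nlinarith [sq_nonneg (N/6), sq_nonneg (3 * s ^ 2 / (4 * σ ^ 2))]
    linarith
  have hnub : ∀ σ : ℝ, 0 < σ → nstar σ ≤ Real.sqrt N * s / (2 * σ) := by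
    intro σ hσ
    rw [hnstar σ]
    have h1 : Real.sqrt (N * s ^ 2 / (4 * σ ^ 2) + (3 * s ^ 2 / (4 * σ ^ 2)) ^ 2)
        ≤ Real.sqrt (N * s ^ 2 / (4 * σ ^ 2)) + Real.sqrt ((3 * s ^ 2 / (4 * σ ^ 2)) ^ 2) :=
      sqrt_add_le'' _ _ (by positivity) (by positivity)
    rw [Real.sqrt_sq (by positivity), hsx σ hσ] at h1
    linarith
  have hnlb : ∀ σ : ℝ, 0 < σ → 3 * s ≤ Real.sqrt N * σ →
      Real.sqrt N * s / (4 * σ) ≤ nstar σ := by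
    intro σ hσ h3
    rw [hnstar σ]
    have h1 : Real.sqrt (N * s ^ 2 / (4 * σ ^ 2))
        ≤ Real.sqrt (N * s ^ 2 / (4 * σ ^ 2) + (3 * s ^ 2 / (4 * σ ^ 2)) ^ 2) :=
      Real.sqrt_le_sqrt (le_add_of_nonneg_right (by positivity))
    rw [hsx σ hσ] at h1
    have hb : 3 * s ^ 2 / (4 * σ ^ 2) ≤ Real.sqrt N * s / (4 * σ) := by
      rw [div_le_div_iff₀ (by positivity) (by positivity)]
      nlinarith [mul_le_mul_of_nonneg_right h3 (by positivity : (0:ℝ) ≤ 4 * s * σ)]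
    have he : Real.sqrt N * s / (2 * σ)
        = Real.sqrt N * s / (4 * σ) + Real.sqrt N * s / (4 * σ) := by ring
    linarith
  have hDpos : ∀ σ : ℝ, 0 < σ → 0 < N * (μ + σ / Real.sqrt Real.pi) := by
    intro σ hσ; positivity
  have hQpos : ∀ σ : ℝ, 0 < σ → 0 < Real.sqrt (σ ^ 2 + s ^ 2 / nstar σ) := by
    intro σ hσ
    have := hnp σ hσ
    exact Real.sqrt_pos.mpr (by positivity)
  have hQgt : ∀ σ : ℝ, 0 < σ → σ < Real.sqrt (σ ^ 2 + s ^ 2 / nstar σ) := by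
    intro σ hσ
    have hn := hnp σ hσ
    have h1 : σ ^ 2 < σ ^ 2 + s ^ 2 / nstar σ := by
      have : 0 < s ^ 2 / nstar σ := by positivity
      linarith
    calc σ = Real.sqrt (σ ^ 2) := (Real.sqrt_sq hσ.le).symm
    _ < _ := Real.sqrt_lt_sqrt (by positivity) h1
  have hQsq : ∀ σ : ℝ, 0 < σ →
      Real.sqrt (σ ^ 2 + s ^ 2 / nstar σ) ^ 2 = σ ^ 2 + s ^ 2 / nstar σ := by
    intro σ hσ
    have := hnp σ hσ
    exact Real.sq_sqrt (by positivity)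
  -- key identity
  have key : ∀ σ : ℝ, 0 < σ → R σ =
      (N * σ - (N - 2 * nstar σ) * σ ^ 2 / Real.sqrt (σ ^ 2 + s ^ 2 / nstar σ)) /
      (Real.sqrt Real.pi * (N * (μ + σ / Real.sqrt Real.pi))) := by
    intro σ hσ
    have hQp := hQpos σ hσ
    have hD := hDpos σ hσ
    rw [hR σ]
    obtain ⟨Q, hQ⟩ : ∃ q, Real.sqrt (σ ^ 2 + s ^ 2 / nstar σ) = q := ⟨_, rfl⟩
    rw [hQ] at hQp ⊢
    have hπne := hπ.ne'
    have hQne := hQp.ne'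
    rw [div_eq_div_iff hD.ne' (mul_ne_zero hπ.ne' hD.ne')]
    field_simp
    ring
  -- numerator positivity
  have hnumpos : ∀ σ : ℝ, 0 < σ →
      0 < N * σ - (N - 2 * nstar σ) * σ ^ 2 / Real.sqrt (σ ^ 2 + s ^ 2 / nstar σ) := by
    intro σ hσ
    have hQp := hQpos σ hσ
    have hQg := hQgt σ hσ
    have hnpσ := hnp σ hσ
    obtain ⟨n, hn⟩ : ∃ n, nstar σ = n := ⟨_, rfl⟩
    rw [hn] at hQp hQg hnpσ ⊢
    obtain ⟨Q, hQ⟩ : ∃ q, Real.sqrt (σ ^ 2 + s ^ 2 / n) = q := ⟨_, rfl⟩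
    rw [hQ] at hQp hQg ⊢
    have h1 : (N - 2 * n) * σ ^ 2 / Q ≤ N * σ ^ 2 / Q := by
      gcongr
      linarith
    have h2 : N * σ ^ 2 / Q < N * σ := by
      rw [div_lt_iff₀ hQp]
      nlinarith [mul_lt_mul_of_pos_left hQg (by positivity : (0:ℝ) < N * σ)]
    linarith
  have hpos : ∀ σ : ℝ, 0 < σ → 0 < R σ := by
    intro σ hσ
    rw [key σ hσ]
    exact div_pos (hnumpos σ hσ) (by positivity)
  have hfr : ∀ σ : ℝ, 0 < σ →
      σ ^ 2 / Real.sqrt (σ ^ 2 + s ^ 2 / nstar σ) ≤ σ := by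
    intro σ hσ
    rw [div_le_iff₀ (hQpos σ hσ)]
    nlinarith [hQgt σ hσ]
  -- small-σ bound
  obtain ⟨K0, hK0⟩ : ∃ k : ℝ, N + N / 3 * Real.sqrt (N / 6) / s = k := ⟨_, rfl⟩
  have hK0pos : 0 < K0 := by rw [← hK0]; positivity
  obtain ⟨K, hK⟩ : ∃ k : ℝ, K0 / (Real.sqrt Real.pi * (N * μ)) = k := ⟨_, rfl⟩
  have hKpos : 0 < K := by rw [← hK]; positivity
  have hsmall : ∀ σ : ℝ, 0 < σ → σ ≤ 1 → R σ ≤ σ * K := by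
    intro σ hσ hσ1
    have hnpσ := hnp σ hσ
    have hn6σ := hn6 σ hσ
    have hQp := hQpos σ hσ
    have hfrσ := hfr σ hσ
    have hnumσ := (hnumpos σ hσ).le
    rw [key σ hσ]
    obtain ⟨n, hn⟩ : ∃ n, nstar σ = n := ⟨_, rfl⟩
    rw [hn] at hnpσ hn6σ hQp hfrσ hnumσ ⊢
    obtain ⟨Q, hQ⟩ : ∃ q, Real.sqrt (σ ^ 2 + s ^ 2 / n) = q := ⟨_, rfl⟩
    rw [hQ] at hQp hfrσ hnumσ ⊢
    -- Q ≥ s / √(N/6)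
    have hQlb : s / Real.sqrt (N / 6) ≤ Q := by
      rw [← hQ, Real.le_sqrt (by positivity) (by positivity)]
      have h1 : (s / Real.sqrt (N / 6)) ^ 2 = s ^ 2 / (N / 6) := by
        rw [div_pow, Real.sq_sqrt (by positivity)]
      rw [h1]
      have h2 : s ^ 2 / (N / 6) ≤ s ^ 2 / n := by
        rw [div_le_div_iff₀ (by positivity) hnpσ]
        nlinarith [sq_nonneg s]
      nlinarith
    have hfrb : σ ^ 2 / Q ≤ σ ^ 2 * Real.sqrt (N / 6) / s := by
      have h1 : σ ^ 2 / Q ≤ σ ^ 2 / (s / Real.sqrt (N / 6)) := by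
        gcongr
      have h2 : σ ^ 2 / (s / Real.sqrt (N / 6)) = σ ^ 2 * Real.sqrt (N / 6) / s := by
        field_simp
      linarith
    have h3 : 2 * n * (σ ^ 2 / Q) ≤ 2 * (N / 6) * (σ * Real.sqrt (N / 6) / s) := by
      calc 2 * n * (σ ^ 2 / Q) ≤ 2 * (N / 6) * (σ ^ 2 * Real.sqrt (N / 6) / s) :=
        mul_le_mul (by linarith) hfrb (by positivity) (by positivity)
      _ ≤ 2 * (N / 6) * (σ * Real.sqrt (N / 6) / s) := by
        gcongr
        nlinarith
    have h4 : 0 ≤ N * (σ ^ 2 / Q) := by positivity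
    have he2 : σ * K0 = N * σ + 2 * (N / 6) * (σ * Real.sqrt (N / 6) / s) := by
      rw [← hK0]; ring
    have hnum : N * σ - (N - 2 * n) * σ ^ 2 / Q ≤ σ * K0 := by
      have e : N * σ - (N - 2 * n) * σ ^ 2 / Q
          = N * σ - N * (σ ^ 2 / Q) + 2 * n * (σ ^ 2 / Q) := by ring
      rw [e]
      linarith
    have hD1pos : 0 < Real.sqrt Real.pi * (N * (μ + σ / Real.sqrt Real.pi)) := by positivity
    have hD2pos : 0 < Real.sqrt Real.pi * (N * μ) := by positivity
    have hD21 : Real.sqrt Real.pi * (N * μ)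
        ≤ Real.sqrt Real.pi * (N * (μ + σ / Real.sqrt Real.pi)) := by
      have h0 : (0:ℝ) ≤ σ / Real.sqrt Real.pi := by positivity
      exact mul_le_mul_of_nonneg_left
        (mul_le_mul_of_nonneg_left (le_add_of_nonneg_right h0) hN.le) hπ.le
    have hstep : (N * σ - (N - 2 * n) * σ ^ 2 / Q) /
        (Real.sqrt Real.pi * (N * (μ + σ / Real.sqrt Real.pi)))
        ≤ (N * σ - (N - 2 * n) * σ ^ 2 / Q) / (Real.sqrt Real.pi * (N * μ)) := by
      rw [div_le_div_iff₀ hD1pos hD2pos]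
      exact mul_le_mul_of_nonneg_left hD21 hnumσ
    have hstep2 : (N * σ - (N - 2 * n) * σ ^ 2 / Q) / (Real.sqrt Real.pi * (N * μ))
        ≤ σ * K0 / (Real.sqrt Real.pi * (N * μ)) := by
      rw [div_le_div_iff₀ hD2pos hD2pos]
      exact mul_le_mul_of_nonneg_right hnum hD2pos.le
    have he : σ * K0 / (Real.sqrt Real.pi * (N * μ)) = σ * K := by
      rw [← hK]; ring
    calc (N * σ - (N - 2 * n) * σ ^ 2 / Q) /
        (Real.sqrt Real.pi * (N * (μ + σ / Real.sqrt Real.pi))) ≤ _ := hstep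
    _ ≤ _ := hstep2
    _ = σ * K := he
  -- large-σ bound
  have hlarge : ∀ σ : ℝ, 0 < σ → 3 * s ≤ Real.sqrt N * σ →
      N * σ - (N - 2 * nstar σ) * σ ^ 2 / Real.sqrt (σ ^ 2 + s ^ 2 / nstar σ)
        ≤ 3 * (Real.sqrt N * s) := by
    intro σ hσ h3
    have hnpσ := hnp σ hσ
    have hnlbσ := hnlb σ hσ h3
    have hnubσ := hnub σ hσ
    have hQp := hQpos σ hσ
    have hQg := hQgt σ hσ
    have hQs := hQsq σ hσ
    have hfrσ := hfr σ hσ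
    obtain ⟨n, hn⟩ : ∃ n, nstar σ = n := ⟨_, rfl⟩
    rw [hn] at hnpσ hnlbσ hnubσ hQp hQg hQs hfrσ ⊢
    obtain ⟨Q, hQ⟩ : ∃ q, Real.sqrt (σ ^ 2 + s ^ 2 / n) = q := ⟨_, rfl⟩
    rw [hQ] at hQp hQg hQs hfrσ ⊢
    have hQmσ : Q - σ ≤ s ^ 2 / n / (2 * σ) := by
      rw [le_div_iff₀ (by positivity)]
      nlinarith [sq_nonneg (Q - σ)]
    have h1 : 2 * σ - Q ≤ σ ^ 2 / Q := by
      rw [le_div_iff₀ hQp]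
      nlinarith [sq_nonneg (Q - σ)]
    have h2 : σ - σ ^ 2 / Q ≤ Q - σ := by linarith
    have h4 : s ^ 2 / n ≤ 4 * σ * s / Real.sqrt N := by
      have ha : s ^ 2 / n ≤ s ^ 2 / (Real.sqrt N * s / (4 * σ)) := by
        gcongr
      have hb : s ^ 2 / (Real.sqrt N * s / (4 * σ)) = 4 * σ * s / Real.sqrt N := by
        rw [div_eq_div_iff (by positivity) hsNpos.ne']
        field_simp
      linarith
    have h5 : σ - σ ^ 2 / Q ≤ 2 * s / Real.sqrt N := by
      have hc : s ^ 2 / n / (2 * σ) ≤ (4 * σ * s / Real.sqrt N) / (2 * σ) := by gcongr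
      have he : (4 * σ * s / Real.sqrt N) / (2 * σ) = 2 * s / Real.sqrt N := by
        rw [div_div, div_eq_div_iff (by positivity) (by positivity)]
        ring
      linarith
    have h6 : N * (σ - σ ^ 2 / Q) ≤ 2 * (Real.sqrt N * s) := by
      have hd : N * (σ - σ ^ 2 / Q) ≤ N * (2 * s / Real.sqrt N) :=
        mul_le_mul_of_nonneg_left h5 hN.le
      have he : N * (2 * s / Real.sqrt N) = 2 * (Real.sqrt N * s) := by
        rw [mul_comm, div_mul_eq_mul_div, eq_comm, eq_div_iff hsNpos.ne']
        nlinarith [hsqN]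
      linarith
    have h7 : 2 * n * (σ ^ 2 / Q) ≤ Real.sqrt N * s := by
      have ha : 2 * n * (σ ^ 2 / Q) ≤ 2 * (Real.sqrt N * s / (2 * σ)) * σ :=
        mul_le_mul (by linarith) hfrσ (by positivity) (by positivity)
      have he : 2 * (Real.sqrt N * s / (2 * σ)) * σ = Real.sqrt N * s := by
        field_simp
      linarith
    have e : N * σ - (N - 2 * n) * σ ^ 2 / Q
        = N * (σ - σ ^ 2 / Q) + 2 * n * (σ ^ 2 / Q) := by ring
    rw [e]
    linarith
  -- Tendsto at ∞
  have hTdenom : Tendsto (fun σ : ℝ => Real.sqrt Real.pi * (N * (μ + σ / Real.sqrt Real.pi)))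
      atTop atTop := by
    apply Tendsto.const_mul_atTop hπ
    apply Tendsto.const_mul_atTop hN
    exact tendsto_atTop_add_const_left atTop μ (Tendsto.atTop_div_const hπ tendsto_id)
  have hT0 : Tendsto R atTop (nhds 0) := by
    apply squeeze_zero' (g := fun σ : ℝ => 3 * (Real.sqrt N * s) /
      (Real.sqrt Real.pi * (N * (μ + σ / Real.sqrt Real.pi))))
    · filter_upwards [eventually_ge_atTop (max 1 (3 * s / Real.sqrt N))] with σ hσ
      have hσ1 : (1:ℝ) ≤ σ := le_trans (le_max_left _ _) hσ
      exact (hpos σ (by linarith)).le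
    · filter_upwards [eventually_ge_atTop (max 1 (3 * s / Real.sqrt N))] with σ hσ
      have hσ1 : (1:ℝ) ≤ σ := le_trans (le_max_left _ _) hσ
      have hσp : 0 < σ := by linarith
      have hσ2 : 3 * s / Real.sqrt N ≤ σ := le_trans (le_max_right _ _) hσ
      have h3 : 3 * s ≤ Real.sqrt N * σ := by
        rw [div_le_iff₀ hsNpos] at hσ2
        linarith
      rw [key σ hσp]
      have hD1pos : 0 < Real.sqrt Real.pi * (N * (μ + σ / Real.sqrt Real.pi)) := by positivity
      rw [div_le_div_iff₀ hD1pos hD1pos]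
      exact mul_le_mul_of_nonneg_right (hlarge σ hσp h3) hD1pos.le
    · exact Tendsto.div_atTop tendsto_const_nhds hTdenom
  refine ⟨hT0, hpos, ?_⟩
  -- Continuity of R on Ioi 0
  have hnne : ∀ x ∈ Set.Ioi (0:ℝ), nstar x ≠ 0 := fun x hx => (hnp x hx).ne'
  have h4ne : ∀ x ∈ Set.Ioi (0:ℝ), (4 * x ^ 2 : ℝ) ≠ 0 := by
    intro x hx
    have : (0:ℝ) < x := hx
    positivity
  have hcn : ContinuousOn nstar (Set.Ioi 0) := by
    apply ContinuousOn.congr (f := fun σ : ℝ => Real.sqrt (N * s ^ 2 / (4 * σ ^ 2) +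
      (3 * s ^ 2 / (4 * σ ^ 2)) ^ 2) - 3 * s ^ 2 / (4 * σ ^ 2))
    · apply ContinuousOn.sub
      · apply Real.continuous_sqrt.comp_continuousOn
        apply ContinuousOn.add
        · exact ContinuousOn.div continuousOn_const (by fun_prop) h4ne
        · exact (ContinuousOn.div continuousOn_const (by fun_prop) h4ne).pow 2
      · exact ContinuousOn.div continuousOn_const (by fun_prop) h4ne
    · intro x _; exact hnstar x
  have hcR : ContinuousOn R (Set.Ioi 0) := by
    apply ContinuousOn.congr (f := fun σ : ℝ =>
      (N * (μ + σ / Real.sqrt Real.pi) -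
        (N * μ + (N - 2 * nstar σ) * σ ^ 2 /
          (Real.sqrt Real.pi * Real.sqrt (σ ^ 2 + s ^ 2 / nstar σ)))) /
        (N * (μ + σ / Real.sqrt Real.pi)))
    · have hA : ContinuousOn (fun σ : ℝ => N * (μ + σ / Real.sqrt Real.pi))
          (Set.Ioi 0) := by fun_prop
      apply ContinuousOn.div
      · apply ContinuousOn.sub hA
        apply ContinuousOn.add continuousOn_const
        apply ContinuousOn.div
        · exact ((continuousOn_const.sub (continuousOn_const.mul hcn)).mul (by fun_prop))
        · apply ContinuousOn.mul continuousOn_const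
          apply Real.continuous_sqrt.comp_continuousOn
          apply ContinuousOn.add (by fun_prop)
          exact ContinuousOn.div continuousOn_const hcn hnne
        · intro x hx
          exact (mul_pos hπ (hQpos x hx)).ne'
      · exact hA
      · intro x hx
        exact (hDpos x hx).ne'
    · intro x _; exact hR x
  -- the maximizer
  set c : ℝ := R 1 with hc
  have hcpos : 0 < c := hpos 1 one_pos
  obtain ⟨M, hM⟩ := eventually_atTop.mp (hT0.eventually_lt_const hcpos)
  set δ : ℝ := min (1/2) (c / (2 * K)) with hδ
  have hδpos : 0 < δ := lt_min (by norm_num) (by positivity)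
  have hδhalf : δ ≤ 1/2 := min_le_left _ _
  set M' : ℝ := max M 1 with hM'
  have hδ1 : δ ≤ 1 := by linarith
  have h1M' : (1:ℝ) ≤ M' := le_max_right _ _
  have hsub : Set.Icc δ M' ⊆ Set.Ioi 0 := fun x hx => lt_of_lt_of_le hδpos hx.1
  obtain ⟨σ₀, hσ₀mem, hσ₀max⟩ := isCompact_Icc.exists_isMaxOn
    ⟨1, hδ1, h1M'⟩ (hcR.mono hsub)
  have hσ₀pos : 0 < σ₀ := lt_of_lt_of_le hδpos hσ₀mem.1
  have hcle : c ≤ R σ₀ := hσ₀max ⟨hδ1, h1M'⟩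
  refine ⟨σ₀, hσ₀pos, ?_⟩
  intro σ hσ
  rcases le_or_gt σ δ with hle | hgt
  · have h1 : R σ ≤ σ * K := hsmall σ hσ (by linarith)
    have h2 : σ * K ≤ δ * K := by gcongr
    have h3 : δ * K ≤ (c / (2 * K)) * K := by
      gcongr
      exact min_le_right _ _
    have h4 : (c / (2 * K)) * K = c / 2 := by
      field_simp
    linarith
  · rcases le_or_gt σ M' with hle2 | hgt2
    · exact hσ₀max ⟨hgt.le, hle2⟩
    · have hMσ : M ≤ σ := by
        have : M ≤ M' := le_max_left _ _
        linarith
      have := hM σ hMσ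
      linarith
end

section
/- Let s > 0, σ₁ > 0, c > 1, μ be real, and N > (2c⁴ − c² − 1)·s²/(c²·σ₁²). Define g(n₁, n₂) = N·μ + (N − n₁ − n₂)·v(n₁, n₂)/√(2π) with v(n₁, n₂) = √(σ₁⁴/(σ₁² + s²/n₁) + c⁴·σ₁⁴/(c²·σ₁² + s²/n₂)), and let n₁* = s·(√(2c²(c²+1)·N·σ₁² + (2c⁴+5c²+2)·s²) − c·s·(1+2c²))/(2(c³+c)·σ₁²) and n₂* = s·(c·√(2c²(c²+1)·N·σ₁² + (2c⁴+5c²+2)·s²) − (c²+2)·s)/(2c²(c²+1)·σ₁²). Then both partial derivatives of g vanish at (n₁*, n₂*): ∂g/∂n₁(n₁*, n₂*) = 0 and ∂g/∂n₂(n₁*, n₂*) = 0. -/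
set_option maxHeartbeats 1000000


open Real

theorem incumbent_challenger_first_order_conditions (N s σ₁ c μ : ℝ)
    (hs : 0 < s) (hσ₁ : 0 < σ₁) (hc : 1 < c)
    (hN : (2 * c ^ 4 - c ^ 2 - 1) * s ^ 2 / (c ^ 2 * σ₁ ^ 2) < N)
    (g : ℝ → ℝ → ℝ)
    (hg : ∀ n₁ n₂, g n₁ n₂ = N * μ + (N - n₁ - n₂) *
      Real.sqrt (σ₁ ^ 4 / (σ₁ ^ 2 + s ^ 2 / n₁) +
        c ^ 4 * σ₁ ^ 4 / (c ^ 2 * σ₁ ^ 2 + s ^ 2 / n₂)) / Real.sqrt (2 * Real.pi))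
    (n₁star n₂star : ℝ)
    (hn₁ : n₁star = s * (Real.sqrt (2 * c ^ 2 * (c ^ 2 + 1) * N * σ₁ ^ 2 +
        (2 * c ^ 4 + 5 * c ^ 2 + 2) * s ^ 2) - c * s * (1 + 2 * c ^ 2)) /
      (2 * (c ^ 3 + c) * σ₁ ^ 2))
    (hn₂ : n₂star = s * (c * Real.sqrt (2 * c ^ 2 * (c ^ 2 + 1) * N * σ₁ ^ 2 +
        (2 * c ^ 4 + 5 * c ^ 2 + 2) * s ^ 2) - (c ^ 2 + 2) * s) /
      (2 * c ^ 2 * (c ^ 2 + 1) * σ₁ ^ 2)) :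
    HasDerivAt (fun n₁ => g n₁ n₂star) 0 n₁star ∧
    HasDerivAt (fun n₂ => g n₁star n₂) 0 n₂star := by
  have hc0 : (0:ℝ) < c := lt_trans one_pos hc
  have hc2 : (1:ℝ) < c ^ 2 := by nlinarith
  have hpoly : (0:ℝ) < 2 * c ^ 4 - c ^ 2 - 1 := by nlinarith [mul_pos (sub_pos.2 hc2) (sub_pos.2 hc2)]
  have hNpos : 0 < N :=
    lt_trans (div_pos (mul_pos hpoly (pow_pos hs 2)) (by positivity)) hN
  set R := 2 * c ^ 2 * (c ^ 2 + 1) * N * σ₁ ^ 2 + (2 * c ^ 4 + 5 * c ^ 2 + 2) * s ^ 2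
    with hRdef
  have hRpos : 0 < R := by
    have h1 : 0 < 2 * c ^ 2 * (c ^ 2 + 1) * N * σ₁ ^ 2 := by
      have h2 : (0:ℝ) < 2 * c ^ 2 * (c ^ 2 + 1) := by positivity
      exact mul_pos (mul_pos h2 hNpos) (pow_pos hσ₁ 2)
    have h3 : (0:ℝ) < (2 * c ^ 4 + 5 * c ^ 2 + 2) * s ^ 2 := by positivity
    rw [hRdef]; linarith
  set r := Real.sqrt R with hrdef
  have hr2 : r ^ 2 = R := Real.sq_sqrt hRpos.le
  have hrpos : 0 < r := Real.sqrt_pos.2 hRpos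
  clear_value r
  clear_value R
  -- key inequalities
  have hNc : (2 * c ^ 4 - c ^ 2 - 1) * s ^ 2 < N * (c ^ 2 * σ₁ ^ 2) := by
    rw [div_lt_iff₀ (by positivity)] at hN; linarith
  have hra : c * s * (1 + 2 * c ^ 2) < r := by
    have h2 : (c * s * (1 + 2 * c ^ 2)) ^ 2 < r ^ 2 := by
      rw [hr2, hRdef]; nlinarith [hNc, pow_pos hc0 2, sq_nonneg s]
    nlinarith [hrpos, mul_pos (mul_pos hc0 hs) (show (0:ℝ) < 1 + 2 * c ^ 2 by positivity)]
  have hrb : (c ^ 2 + 2) * s < c * r := by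
    have h3 := mul_lt_mul_of_pos_left hra hc0
    have h4 : (0:ℝ) < c ^ 4 - 1 := by nlinarith
    nlinarith [mul_pos hs h4]
  have hapos : 0 < r - c * s * (1 + 2 * c ^ 2) := by linarith
  have hbpos : 0 < c * r - (c ^ 2 + 2) * s := by linarith
  have hrcs : 0 < r + c * s := by positivity
  have hn1pos : 0 < n₁star := by
    rw [hn₁]; exact div_pos (mul_pos hs hapos) (by positivity)
  have hn2pos : 0 < n₂star := by
    rw [hn₂]; exact div_pos (mul_pos hs hbpos) (by positivity)
  have hden1 : 0 < σ₁ ^ 2 + s ^ 2 / n₁star :=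
    add_pos (pow_pos hσ₁ 2) (div_pos (pow_pos hs 2) hn1pos)
  have hden2 : 0 < c ^ 2 * σ₁ ^ 2 + s ^ 2 / n₂star :=
    add_pos (by positivity) (div_pos (pow_pos hs 2) hn2pos)
  have hQpos : 0 < σ₁ ^ 4 / (σ₁ ^ 2 + s ^ 2 / n₁star) +
      c ^ 4 * σ₁ ^ 4 / (c ^ 2 * σ₁ ^ 2 + s ^ 2 / n₂star) :=
    add_pos (div_pos (pow_pos hσ₁ 4) hden1) (div_pos (by positivity) hden2)
  have hNr : N = (r ^ 2 - (2 * c ^ 4 + 5 * c ^ 2 + 2) * s ^ 2) /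
      (2 * c ^ 2 * (c ^ 2 + 1) * σ₁ ^ 2) := by
    rw [hr2, hRdef]; field_simp; ring
  have hne1 : r - s * c * (1 + c ^ 2 * 2) ≠ 0 := ne_of_gt (by linarith)
  have hne2 : c * r - s * (c ^ 2 + 2) ≠ 0 := ne_of_gt (by linarith)
  have hne3 : r - c * s * (1 + c ^ 2 * 2) ≠ 0 := ne_of_gt (by linarith)
  have hne4 : r * c - s * (c ^ 2 + 2) ≠ 0 := ne_of_gt (by linarith)
  -- closed forms
  have e1 : σ₁ ^ 2 + s ^ 2 / n₁star =
      σ₁ ^ 2 * (r + c * s) / (r - c * s * (1 + 2 * c ^ 2)) := by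
    rw [hn₁]
    field_simp
    ring
  have e2 : c ^ 2 * σ₁ ^ 2 + s ^ 2 / n₂star =
      c ^ 3 * σ₁ ^ 2 * (r + c * s) / (c * r - (c ^ 2 + 2) * s) := by
    rw [hn₂]
    field_simp
    ring
  have e3 : s ^ 2 / n₁star ^ 2 =
      (2 * (c ^ 3 + c) * σ₁ ^ 2) ^ 2 / (r - c * s * (1 + 2 * c ^ 2)) ^ 2 := by
    rw [hn₁]
    field_simp
  have e4 : s ^ 2 / n₂star ^ 2 =
      (2 * c ^ 2 * (c ^ 2 + 1) * σ₁ ^ 2) ^ 2 / (c * r - (c ^ 2 + 2) * s) ^ 2 := by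
    rw [hn₂]
    field_simp
  have eK : N - n₁star - n₂star =
      (r - 3 * c * s) * (r + c * s) / (2 * c ^ 2 * (c ^ 2 + 1) * σ₁ ^ 2) := by
    rw [hNr, hn₁, hn₂]
    field_simp
    ring
  have key1 : (N - n₁star - n₂star) *
      (σ₁ ^ 4 * (s ^ 2 / n₁star ^ 2) / (σ₁ ^ 2 + s ^ 2 / n₁star) ^ 2) =
      2 * (σ₁ ^ 4 / (σ₁ ^ 2 + s ^ 2 / n₁star) +
        c ^ 4 * σ₁ ^ 4 / (c ^ 2 * σ₁ ^ 2 + s ^ 2 / n₂star)) := by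
    rw [eK, e1, e2, e3]
    field_simp
    ring
  have key2 : (N - n₁star - n₂star) *
      (c ^ 4 * σ₁ ^ 4 * (s ^ 2 / n₂star ^ 2) / (c ^ 2 * σ₁ ^ 2 + s ^ 2 / n₂star) ^ 2) =
      2 * (σ₁ ^ 4 / (σ₁ ^ 2 + s ^ 2 / n₁star) +
        c ^ 4 * σ₁ ^ 4 / (c ^ 2 * σ₁ ^ 2 + s ^ 2 / n₂star)) := by
    rw [eK, e1, e2, e4]
    field_simp
    ring
  have hsqQ : (0:ℝ) < Real.sqrt (σ₁ ^ 4 / (σ₁ ^ 2 + s ^ 2 / n₁star) +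
      c ^ 4 * σ₁ ^ 4 / (c ^ 2 * σ₁ ^ 2 + s ^ 2 / n₂star)) := Real.sqrt_pos.2 hQpos
  have hQ2 : Real.sqrt (σ₁ ^ 4 / (σ₁ ^ 2 + s ^ 2 / n₁star) +
        c ^ 4 * σ₁ ^ 4 / (c ^ 2 * σ₁ ^ 2 + s ^ 2 / n₂star)) *
      Real.sqrt (σ₁ ^ 4 / (σ₁ ^ 2 + s ^ 2 / n₁star) +
        c ^ 4 * σ₁ ^ 4 / (c ^ 2 * σ₁ ^ 2 + s ^ 2 / n₂star)) =
      σ₁ ^ 4 / (σ₁ ^ 2 + s ^ 2 / n₁star) +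
        c ^ 4 * σ₁ ^ 4 / (c ^ 2 * σ₁ ^ 2 + s ^ 2 / n₂star) :=
    Real.mul_self_sqrt hQpos.le
  constructor
  · simp only [hg]
    have d1 : HasDerivAt (fun n : ℝ => s ^ 2 / n)
        ((0 * n₁star - s ^ 2 * 1) / n₁star ^ 2) n₁star :=
      (hasDerivAt_const n₁star (s ^ 2)).div (hasDerivAt_id' n₁star) hn1pos.ne'
    have d2 := d1.const_add (σ₁ ^ 2)
    have d4 := (hasDerivAt_const n₁star (σ₁ ^ 4)).div d2 hden1.ne'
    have d5 := d4.add_const (c ^ 4 * σ₁ ^ 4 / (c ^ 2 * σ₁ ^ 2 + s ^ 2 / n₂star))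
    have d6 := d5.sqrt hQpos.ne'
    have d7 : HasDerivAt (fun n : ℝ => N - n - n₂star) (-1) n₁star := by
      simpa using ((hasDerivAt_id' n₁star).const_sub N).sub_const n₂star
    have d8 := d7.mul d6
    have d9 := d8.div_const (Real.sqrt (2 * Real.pi))
    have d10 := d9.const_add (N * μ)
    refine d10.congr_deriv (Eq.symm ?_)
    rw [eq_comm, div_eq_zero_iff]
    left
    simp only [Pi.div_apply]
    have hE : (0 * (σ₁ ^ 2 + s ^ 2 / n₁star) -
        σ₁ ^ 4 * ((0 * n₁star - s ^ 2 * 1) / n₁star ^ 2)) / (σ₁ ^ 2 + s ^ 2 / n₁star) ^ 2 =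
        σ₁ ^ 4 * (s ^ 2 / n₁star ^ 2) / (σ₁ ^ 2 + s ^ 2 / n₁star) ^ 2 := by ring
    rw [hE]
    rw [mul_div_assoc', key1]
    set q := Real.sqrt (σ₁ ^ 4 / (σ₁ ^ 2 + s ^ 2 / n₁star) +
      c ^ 4 * σ₁ ^ 4 / (c ^ 2 * σ₁ ^ 2 + s ^ 2 / n₂star)) with hqdef
    rw [← hQ2]
    have hqne : q ≠ 0 := hsqQ.ne'
    field_simp
    ring
  · simp only [hg]
    have d1 : HasDerivAt (fun n : ℝ => s ^ 2 / n)
        ((0 * n₂star - s ^ 2 * 1) / n₂star ^ 2) n₂star :=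
      (hasDerivAt_const n₂star (s ^ 2)).div (hasDerivAt_id' n₂star) hn2pos.ne'
    have d2 := d1.const_add (c ^ 2 * σ₁ ^ 2)
    have d4 := (hasDerivAt_const n₂star (c ^ 4 * σ₁ ^ 4)).div d2 hden2.ne'
    have d5 := d4.const_add (σ₁ ^ 4 / (σ₁ ^ 2 + s ^ 2 / n₁star))
    have d6 := d5.sqrt hQpos.ne'
    have d7 : HasDerivAt (fun n : ℝ => N - n₁star - n) (-1) n₂star := by
      simpa using (hasDerivAt_id' n₂star).const_sub (N - n₁star)
    have d8 := d7.mul d6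
    have d9 := d8.div_const (Real.sqrt (2 * Real.pi))
    have d10 := d9.const_add (N * μ)
    refine d10.congr_deriv (Eq.symm ?_)
    rw [eq_comm, div_eq_zero_iff]
    left
    simp only [Pi.div_apply]
    have hE : (0 * (c ^ 2 * σ₁ ^ 2 + s ^ 2 / n₂star) -
        c ^ 4 * σ₁ ^ 4 * ((0 * n₂star - s ^ 2 * 1) / n₂star ^ 2)) /
          (c ^ 2 * σ₁ ^ 2 + s ^ 2 / n₂star) ^ 2 =
        c ^ 4 * σ₁ ^ 4 * (s ^ 2 / n₂star ^ 2) / (c ^ 2 * σ₁ ^ 2 + s ^ 2 / n₂star) ^ 2 := by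
      ring
    rw [hE]
    rw [mul_div_assoc', key2]
    set q := Real.sqrt (σ₁ ^ 4 / (σ₁ ^ 2 + s ^ 2 / n₁star) +
      c ^ 4 * σ₁ ^ 4 / (c ^ 2 * σ₁ ^ 2 + s ^ 2 / n₂star)) with hqdef
    rw [← hQ2]
    have hqne : q ≠ 0 := hsqQ.ne'
    field_simp
    ring
end
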